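/- arXiv:2409.07797 — 8 statements merged into one kernel-verified Lean document; each statement's English description precedes it below -/
import Mathlib

section
/- Every quaternion matrix admits a quaternion singular value decomposition: for every m×n quaternion matrix A there exist a unitary m×m quaternion matrix U, a unitary n×n quaternion matrix V, and real numbers σ₁ ≥ σ₂ ≥ … ≥ σ_M ≥ 0 with M = min(m,n), such that A = U * D(σ) * Vᴴ. -/
open Matrix BigOperators Filter

noncomputable section

abbrev Quat := Quaternion ℝ

def IsQUnitary {k : ℕ} (U : Matrix (Fin k) (Fin k) Quat) : Prop :=
  Uᴴ * U = 1 ∧ U * Uᴴ = 1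

def Dmat {m n : ℕ} (s : Fin (min m n) → ℝ) : Matrix (Fin m) (Fin n) Quat :=
  fun i j =>
    if h : (i : ℕ) = (j : ℕ) then
      ((s ⟨(i : ℕ), by have h1 := i.isLt; have h2 := j.isLt; omega⟩ : ℝ) : Quat)
    else 0

def frob {m n : ℕ} (A : Matrix (Fin m) (Fin n) Quat) : ℝ :=
  Real.sqrt (∑ i, ∑ j, ‖A i j‖ ^ 2)

def Sshrink {M : ℕ} (lam alph : ℝ) (σ : Fin M → ℝ) : Fin M → ℝ :=
  let z : Fin M → ℝ := fun i => if lam < σ i then σ i - lam / 2 else 0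
  let nz : ℝ := Real.sqrt (∑ i, z i ^ 2)
  if nz = 0 then fun _ => 0
  else
    let K : ℝ := 1 + alph * lam / (2 * nz)
    fun i =>
      if K * lam / (2 * (K - 1)) < σ i then σ i
      else if lam < σ i then K * (σ i - lam / 2)
      else 0

open Classical in
def softQ (t : ℝ) (q : Quat) : Quat :=
  if q = 0 then 0 else (max (‖q‖ - t) 0 / ‖q‖) • q

def qinner {m n : ℕ} (P Q : Matrix (Fin m) (Fin n) Quat) : ℝ :=
  ∑ i, ∑ j, (star (P i j) * Q i j).re

namespace QSVD

lemma star_mul_self' (q : Quat) : star q * q = ((‖q‖^2 : ℝ) : Quat) := by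
  rw [Quaternion.star_mul_self, Quaternion.normSq_eq_norm_mul_self, sq]
lemma mul_star_self' (q : Quat) : q * star q = ((‖q‖^2 : ℝ) : Quat) := by
  rw [Quaternion.self_mul_star, Quaternion.normSq_eq_norm_mul_self, sq]
lemma coe_sum {n : ℕ} (f : Fin n → ℝ) : ((∑ i, f i : ℝ) : Quat) = ∑ i, ((f i : ℝ) : Quat) :=
  map_sum (algebraMap ℝ Quat) f Finset.univ
def Nsq {n : ℕ} (x : Fin n → Quat) : ℝ := ∑ i, ‖x i‖^2
lemma Nsq_nonneg {n : ℕ} (x : Fin n → Quat) : 0 ≤ Nsq x :=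
  Finset.sum_nonneg fun i _ => sq_nonneg _
lemma inner_self {n : ℕ} (x : Fin n → Quat) :
    ∑ i, star (x i) * x i = ((Nsq x : ℝ) : Quat) := by
  rw [Nsq, coe_sum]
  exact Finset.sum_congr rfl fun i _ => star_mul_self' (x i)

/-- Unitary matrices preserve the quaternionic inner product, hence `Nsq`. -/
lemma Nsq_mulVec {k n : ℕ} (U : Matrix (Fin k) (Fin n) Quat) (hU : Uᴴ * U = 1)
    (x : Fin n → Quat) : Nsq (U.mulVec x) = Nsq x := by
  have key : ∑ i, star ((U.mulVec x) i) * (U.mulVec x) i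
      = ∑ j, star (x j) * x j := by
    simp only [Matrix.mulVec, dotProduct]
    have : ∀ i : Fin k, star (∑ j, U i j * x j) * (∑ j, U i j * x j)
        = ∑ j, ∑ l, star (x j) * (star (U i j) * U i l) * x l := by
      intro i
      rw [star_sum, Finset.sum_mul]
      refine Finset.sum_congr rfl fun j _ => ?_
      rw [Finset.mul_sum]
      refine Finset.sum_congr rfl fun l _ => ?_
      rw [StarMul.star_mul]
      simp [mul_assoc]
    rw [Finset.sum_congr rfl fun i _ => this i]
    rw [Finset.sum_comm]
    have : ∀ j : Fin n, ∑ i, ∑ l, star (x j) * (star (U i j) * U i l) * x l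
        = ∑ l, star (x j) * ((Uᴴ * U) j l) * x l := by
      intro j
      rw [Finset.sum_comm]
      refine Finset.sum_congr rfl fun l _ => ?_
      simp only [Matrix.mul_apply, Matrix.conjTranspose_apply]
      rw [Finset.mul_sum, Finset.sum_mul]
    rw [Finset.sum_congr rfl fun j _ => this j]
    refine Finset.sum_congr rfl fun j _ => ?_
    rw [hU]
    simp [Matrix.one_apply, Finset.sum_ite_eq, star_mul_self']
  have h1 := inner_self (U.mulVec x)
  have h2 := inner_self x
  rw [h1, h2] at key
  exact Quaternion.coe_injective key


lemma qstar_smul (r : ℝ) (q : Quat) : star (r • q) = r • star q := by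
  rw [← Quaternion.coe_mul_eq_smul, StarMul.star_mul, Quaternion.star_coe,
    ← Quaternion.coe_commutes, Quaternion.coe_mul_eq_smul]

lemma isQUnitary_one {k : ℕ} : IsQUnitary (1 : Matrix (Fin k) (Fin k) Quat) := by
  constructor <;> simp

lemma isQUnitary_mul {k : ℕ} {U V : Matrix (Fin k) (Fin k) Quat}
    (hU : IsQUnitary U) (hV : IsQUnitary V) : IsQUnitary (U * V) := by
  obtain ⟨hU1, hU2⟩ := hU; obtain ⟨hV1, hV2⟩ := hV
  constructor
  · rw [Matrix.conjTranspose_mul]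
    calc Vᴴ * Uᴴ * (U * V) = Vᴴ * (Uᴴ * U) * V := by noncomm_ring
    _ = 1 := by rw [hU1, Matrix.mul_one, hV1]
  · rw [Matrix.conjTranspose_mul]
    calc U * V * (Vᴴ * Uᴴ) = U * (V * Vᴴ) * Uᴴ := by noncomm_ring
    _ = 1 := by rw [hV2, Matrix.mul_one, hU2]

/-- Householder matrix. -/
lemma householder {k : ℕ} (w : Fin k → Quat) (hw : Nsq w ≠ 0) :
    ∃ H : Matrix (Fin k) (Fin k) Quat, IsQUnitary H ∧
      ∀ i j, H i j = (1 : Matrix (Fin k) (Fin k) Quat) i j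
        - (2 / Nsq w) • (w i * star (w j)) := by
  set c : ℝ := 2 / Nsq w with hc
  set P : Matrix (Fin k) (Fin k) Quat := Matrix.of fun i j => w i * star (w j) with hP
  set H : Matrix (Fin k) (Fin k) Quat := 1 - c • P with hH
  have hPH : Pᴴ = P := Matrix.ext fun i j => by
    simp only [Matrix.conjTranspose_apply, hP, Matrix.of_apply, StarMul.star_mul, star_star]
  have hsmulH : (c • P)ᴴ = c • Pᴴ := Matrix.ext fun i j => by
    simp only [Matrix.conjTranspose_apply, Matrix.smul_apply, qstar_smul]
  have hHH : Hᴴ = H := by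
    rw [hH, Matrix.conjTranspose_sub, Matrix.conjTranspose_one, hsmulH, hPH]
  have hPP : P * P = Nsq w • P := Matrix.ext fun i j => by
    simp only [Matrix.mul_apply, hP, Matrix.of_apply, Matrix.smul_apply]
    calc ∑ l, w i * star (w l) * (w l * star (w j))
        = ∑ l, w i * (star (w l) * w l) * star (w j) := by
          refine Finset.sum_congr rfl fun l _ => by noncomm_ring
      _ = w i * (∑ l, star (w l) * w l) * star (w j) := by
          rw [Finset.mul_sum, Finset.sum_mul]
      _ = Nsq w • (w i * star (w j)) := by
          rw [inner_self]
          rw [show w i * ((Nsq w : ℝ) : Quat) = Nsq w • w i by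
            rw [← Quaternion.coe_mul_eq_smul]; exact (Quaternion.coe_commutes _ _).symm]
          rw [smul_mul_assoc]
  have hmul : H * H = 1 := by
    rw [hH]
    simp only [Matrix.sub_mul, Matrix.mul_sub, Matrix.one_mul, Matrix.mul_one,
      Matrix.smul_mul, Matrix.mul_smul, hPP, smul_sub]
    have h2 : c • c • Nsq w • P = c • P + c • P := by
      rw [smul_smul, smul_smul, ← add_smul]
      congr 1
      rw [hc]; field_simp; ring
    rw [h2]
    abel
  exact ⟨H, ⟨by rw [hHH, hmul], by rw [hHH, hmul]⟩, fun i j => by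
    simp [hH, Matrix.sub_apply, Matrix.smul_apply, hP, hc]⟩

lemma norm_mul_q (a b : Quat) : ‖a * b‖ = ‖a‖ * ‖b‖ := norm_mul a b

lemma isQUnitary_phase {k : ℕ} (p : Quat) (hp : ‖p‖ = 1) :
    IsQUnitary (Matrix.diagonal (fun i : Fin k => if (i : ℕ) = 0 then p else 1)) := by
  have hsp : star p * p = 1 := by rw [star_mul_self', hp]; norm_num
  have hps : p * star p = 1 := by rw [mul_star_self', hp]; norm_num
  constructor
  · rw [Matrix.diagonal_conjTranspose, Matrix.diagonal_mul_diagonal]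
    convert Matrix.diagonal_one
    rename_i i
    simp only [Pi.star_apply]
    split <;> simp [hsp]
  · rw [Matrix.diagonal_conjTranspose, Matrix.diagonal_mul_diagonal]
    convert Matrix.diagonal_one
    rename_i i
    simp only [Pi.star_apply]
    split <;> simp [hps]

/-- Any unit vector is the first column of some unitary matrix. -/
lemma exists_unitary_col {n : ℕ} (v : Fin (n+1) → Quat) (hv : Nsq v = 1) :
    ∃ U : Matrix (Fin (n+1)) (Fin (n+1)) Quat, IsQUnitary U ∧ ∀ i, U i 0 = v i := by
  classical
  set D : Matrix (Fin (n+1)) (Fin (n+1)) Quat :=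
    Matrix.diagonal (fun i : Fin (n+1) => if (i : ℕ) = 0 then
      (if v 0 = 0 then 1 else (‖v 0‖⁻¹ : ℝ) • v 0) else 1) with hD
  set p : Quat := if v 0 = 0 then 1 else (‖v 0‖⁻¹ : ℝ) • v 0 with hp
  have hpnorm : ‖p‖ = 1 := by
    rw [hp]; split
    · simp
    · rename_i h
      rw [norm_smul, Real.norm_eq_abs, abs_of_nonneg (by positivity)]
      exact inv_mul_cancel₀ (norm_ne_zero_iff.mpr h)
  have hDcol : ∀ i : Fin (n+1), D i 0 = if i = 0 then p else 0 := by
    intro i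
    rw [hD, Matrix.diagonal_apply]
    by_cases h : i = (0 : Fin (n+1)) <;> simp [h, hp]
  have hDunit : IsQUnitary D := isQUnitary_phase p hpnorm
  set v' : Fin (n+1) → Quat := fun i => v i * star p with hv'
  have hsp : star p * p = 1 := by rw [star_mul_self', hpnorm]; norm_num
  have hv'v : ∀ i, v' i * p = v i := by
    intro i; rw [hv']; rw [mul_assoc, hsp, mul_one]
  have hv'0 : v' 0 = ((‖v 0‖ : ℝ) : Quat) := by
    rw [hv', hp]
    by_cases h : v 0 = 0
    · simp [h]
    · simp only [h, if_false]
      rw [qstar_smul, mul_smul_comm, mul_star_self']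
      rw [show (‖v 0‖⁻¹ : ℝ) • (((‖v 0‖^2:ℝ)) : Quat) = ((‖v 0‖⁻¹ * ‖v 0‖^2 : ℝ) : Quat) by
        rw [← Quaternion.coe_mul_eq_smul, ← Quaternion.coe_mul]]
      congr 1
      rw [sq, ← mul_assoc, inv_mul_cancel₀ (norm_ne_zero_iff.mpr h), one_mul]
  have hnv' : ∀ i, ‖v' i‖ = ‖v i‖ := by
    intro i; rw [hv', norm_mul_q, norm_star, hpnorm, mul_one]
  have hNv' : Nsq v' = 1 := by
    rw [Nsq]
    rw [show (∑ i, ‖v' i‖^2) = ∑ i, ‖v i‖^2 from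
      Finset.sum_congr rfl fun i _ => by rw [hnv']]
    exact hv
  have hnv0le : ‖v 0‖ ≤ 1 := by
    have hle : ‖v 0‖^2 ≤ 1 := by
      rw [← hv, Nsq]
      exact Finset.single_le_sum (f := fun i => ‖v i‖^2) (fun i _ => sq_nonneg _)
        (Finset.mem_univ (0 : Fin (n+1)))
    nlinarith [norm_nonneg (v 0)]
  set e : Fin (n+1) → Quat := fun i => if i = 0 then 1 else 0 with he
  set w : Fin (n+1) → Quat := fun i => v' i - e i with hwdef
  have hNw : Nsq w = 2 - 2 * ‖v 0‖ := by
    have expand : ∀ i, ‖w i‖^2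
        = ‖v' i‖^2 - (if i = 0 then 2 * ‖v 0‖ else 0) + (if i = 0 then 1 else 0) := by
      intro i
      by_cases h : i = 0
      · subst h
        have hW : w 0 = ((‖v 0‖ - 1 : ℝ) : Quat) := by
          simp only [hwdef, he, hv'0, if_pos rfl]
          push_cast; ring
        simp only [hW, if_pos rfl, hv'0, Quaternion.norm_coe, Real.norm_eq_abs, sq_abs,
          if_true]
        ring
      · simp only [hwdef, he, if_neg h]
        rw [sub_zero]
        ring
    rw [Nsq, Finset.sum_congr rfl fun i _ => expand i]
    rw [Finset.sum_add_distrib, Finset.sum_sub_distrib]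
    rw [← Nsq, hNv']
    rw [Finset.sum_ite_eq' Finset.univ (0 : Fin (n+1)) (fun _ => 2 * ‖v 0‖),
      Finset.sum_ite_eq' Finset.univ (0 : Fin (n+1)) (fun _ => (1:ℝ))]
    simp
    ring
  by_cases hcase : ‖v 0‖ = 1
  · -- v' = e, use the diagonal phase matrix
    have hNw0 : Nsq w = 0 := by rw [hNw, hcase]; ring
    have hw0 : ∀ i, w i = 0 := by
      intro i
      have h1 : ‖w i‖^2 ≤ 0 := by
        rw [← hNw0, Nsq]
        exact Finset.single_le_sum (f := fun i => ‖w i‖^2) (fun i _ => sq_nonneg _)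
          (Finset.mem_univ i)
      have h2 : ‖w i‖^2 = 0 := le_antisymm h1 (sq_nonneg _)
      rwa [pow_eq_zero_iff (by norm_num), norm_eq_zero] at h2
    refine ⟨D, hDunit, fun i => ?_⟩
    have hv'e : v' i = e i := by
      have h3 := hw0 i; rw [hwdef] at h3; exact sub_eq_zero.mp h3
    rw [hDcol i, ← hv'v i, hv'e, he]
    by_cases h : i = 0 <;> simp [h]
  · -- Householder case
    have hNwne : Nsq w ≠ 0 := by
      rw [hNw]
      have : ‖v 0‖ < 1 := lt_of_le_of_ne hnv0le hcase
      intro hco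
      nlinarith
    obtain ⟨H, hHunit, hHentry⟩ := householder w hNwne
    have hw0 : w 0 = ((‖v 0‖ - 1 : ℝ) : Quat) := by
      rw [hwdef]; simp only [he, if_pos rfl, hv'0]
      push_cast
      ring
    have hHcol : ∀ i, H i 0 = v' i := by
      intro i
      rw [hHentry i 0, hw0]
      rw [show star (((‖v 0‖ - 1 : ℝ) : Quat)) = ((‖v 0‖ - 1 : ℝ) : Quat) from
        Quaternion.star_coe _]
      rw [show w i * ((‖v 0‖ - 1 : ℝ) : Quat) = (‖v 0‖ - 1 : ℝ) • w i by
        rw [← Quaternion.coe_mul_eq_smul, Quaternion.coe_commutes]]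
      rw [smul_smul]
      have hcc : (2 / Nsq w) * (‖v 0‖ - 1) = -1 := by
        rw [hNw]
        have hlt : ‖v 0‖ < 1 := lt_of_le_of_ne hnv0le hcase
        have hne : (2 : ℝ) - 2 * ‖v 0‖ ≠ 0 := by nlinarith
        field_simp
        ring
      rw [hcc, neg_one_smul, sub_neg_eq_add, hwdef]
      have hone : (1 : Matrix (Fin (n+1)) (Fin (n+1)) Quat) i 0 = e i := by
        rw [Matrix.one_apply, he]
      rw [hone]
      module
    refine ⟨H * D, isQUnitary_mul hHunit hDunit, fun i => ?_⟩
    rw [Matrix.mul_apply]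
    rw [show (∑ k, H i k * D k 0) = ∑ k, (if k = 0 then H i k * p else 0) from
      Finset.sum_congr rfl fun k _ => by rw [hDcol k]; split <;> simp]
    rw [Finset.sum_ite_eq' Finset.univ (0 : Fin (n+1)) (fun k => H i k * p)]
    simp only [Finset.mem_univ, if_pos]
    rw [hHcol i, hv'v i]

lemma continuous_Nsq {n : ℕ} : Continuous (Nsq (n := n)) := by
  unfold Nsq
  exact continuous_finset_sum _ fun i _ => ((continuous_apply i).norm.pow 2)

lemma Nsq_basis {n : ℕ} (j : Fin n) : Nsq (fun i => if i = j then (1:Quat) else 0) = 1 := by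
  unfold Nsq
  have h : ∀ i : Fin n, ‖(if i = j then (1:Quat) else 0)‖^2 = if i = j then (1:ℝ) else 0 := by
    intro i; split <;> simp
  rw [Finset.sum_congr rfl fun i _ => h i,
    Finset.sum_ite_eq' Finset.univ j (fun _ => (1:ℝ))]
  simp

lemma exists_max {m n : ℕ} (A : Matrix (Fin m) (Fin (n+1)) Quat) :
    ∃ v, Nsq v = 1 ∧ ∀ x, Nsq x = 1 → Nsq (A.mulVec x) ≤ Nsq (A.mulVec v) := by
  classical
  set S : Set (Fin (n+1) → Quat) := {x | Nsq x = 1} with hS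
  have hclosed : IsClosed S := isClosed_eq continuous_Nsq continuous_const
  have hbdd : Bornology.IsBounded S := by
    apply Bornology.IsBounded.subset (Metric.isBounded_closedBall (x := 0) (r := 1))
    intro x hx
    rw [Metric.mem_closedBall, dist_zero_right]
    rw [pi_norm_le_iff_of_nonneg (by norm_num)]
    intro i
    have h1 : ‖x i‖^2 ≤ 1 := by
      rw [← hx]
      exact Finset.single_le_sum (f := fun i => ‖x i‖^2) (fun i _ => sq_nonneg _)
        (Finset.mem_univ i)
    nlinarith [norm_nonneg (x i)]
  have hcompact : IsCompact S := Metric.isCompact_of_isClosed_isBounded hclosed hbdd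
  have hne : S.Nonempty := ⟨fun i => if i = 0 then 1 else 0, Nsq_basis 0⟩
  have hcont : Continuous fun x : Fin (n+1) → Quat => Nsq (A.mulVec x) := by
    apply continuous_Nsq.comp
    apply continuous_pi
    intro i
    simp only [Matrix.mulVec, dotProduct]
    exact continuous_finset_sum _ fun j _ => continuous_const.mul (continuous_apply j)
  obtain ⟨v, hvS, hmax⟩ := hcompact.exists_isMaxOn hne hcont.continuousOn
  exact ⟨v, hvS, fun x hx => hmax hx⟩

/-- one-step block extension `[[a, 0], [0, W]]`. -/
def fm {m n : ℕ} (a : Quat) (W : Matrix (Fin m) (Fin n) Quat) :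
    Matrix (Fin (m+1)) (Fin (n+1)) Quat :=
  Matrix.of fun i j =>
    Fin.cases (Fin.cases a (fun _ => 0) j) (fun i' => Fin.cases 0 (fun j' => W i' j') j) i

@[simp] lemma fm_zz {m n : ℕ} (a : Quat) (W : Matrix (Fin m) (Fin n) Quat) :
    fm a W 0 0 = a := rfl
@[simp] lemma fm_zs {m n : ℕ} (a : Quat) (W : Matrix (Fin m) (Fin n) Quat) (j : Fin n) :
    fm a W 0 (Fin.succ j) = 0 := by simp [fm]
@[simp] lemma fm_sz {m n : ℕ} (a : Quat) (W : Matrix (Fin m) (Fin n) Quat) (i : Fin m) :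
    fm a W (Fin.succ i) 0 = 0 := by simp [fm]
@[simp] lemma fm_ss {m n : ℕ} (a : Quat) (W : Matrix (Fin m) (Fin n) Quat) (i : Fin m)
    (j : Fin n) : fm a W (Fin.succ i) (Fin.succ j) = W i j := by simp [fm]

lemma fm_conjTranspose {m n : ℕ} (a : Quat) (W : Matrix (Fin m) (Fin n) Quat) :
    (fm a W)ᴴ = fm (star a) Wᴴ := by
  refine Matrix.ext fun i j => ?_
  rw [Matrix.conjTranspose_apply]
  induction i using Fin.cases with
  | zero =>
    induction j using Fin.cases with
    | zero => simp
    | succ j' => simp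
  | succ i' =>
    induction j using Fin.cases with
    | zero => simp
    | succ j' => simp [Matrix.conjTranspose_apply]

lemma fm_mul {m n k : ℕ} (a b : Quat) (W : Matrix (Fin m) (Fin n) Quat)
    (X : Matrix (Fin n) (Fin k) Quat) : fm a W * fm b X = fm (a * b) (W * X) := by
  refine Matrix.ext fun i j => ?_
  rw [Matrix.mul_apply, Fin.sum_univ_succ]
  induction i using Fin.cases with
  | zero =>
    induction j using Fin.cases with
    | zero => simp
    | succ j' => simp
  | succ i' =>
    induction j using Fin.cases with
    | zero => simp
    | succ j' => simp [Matrix.mul_apply]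

lemma fm_one {k : ℕ} : fm 1 (1 : Matrix (Fin k) (Fin k) Quat) = 1 := by
  refine Matrix.ext fun i j => ?_
  induction i using Fin.cases with
  | zero =>
    induction j using Fin.cases with
    | zero => simp
    | succ j' => simp [Matrix.one_apply, (Fin.succ_ne_zero j').symm]
  | succ i' =>
    induction j using Fin.cases with
    | zero => simp [Matrix.one_apply, Fin.succ_ne_zero i']
    | succ j' => simp [Matrix.one_apply, Fin.succ_inj]

lemma fm_unitary {k : ℕ} {W : Matrix (Fin k) (Fin k) Quat} (hW : IsQUnitary W) :
    IsQUnitary (fm 1 W) := by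
  obtain ⟨h1, h2⟩ := hW
  constructor
  · rw [fm_conjTranspose, star_one, fm_mul, h1, one_mul, fm_one]
  · rw [fm_conjTranspose, star_one, fm_mul, h2, one_mul, fm_one]

lemma Dmat_cons {m n : ℕ} (a : ℝ) (σ : Fin (min m n) → ℝ) :
    Dmat (fun i : Fin (min (m+1) (n+1)) =>
        Fin.cons (α := fun _ => ℝ) a σ (Fin.cast (Nat.succ_min_succ m n) i))
      = fm ((a : ℝ) : Quat) (Dmat σ) := by
  refine Matrix.ext fun i j => ?_
  induction i using Fin.cases with
  | zero =>
    induction j using Fin.cases with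
    | zero =>
      rw [fm_zz, Dmat]
      simp only [Fin.val_zero]
      simp only [eq_self_iff_true, dite_true, ↓reduceDIte]
      have hc : ∀ pf : (0:ℕ) < min (m+1) (n+1),
          Fin.cast (Nat.succ_min_succ m n) ⟨0, pf⟩ = 0 := fun pf => Fin.ext (by simp)
      rw [hc, Fin.cons_zero]
    | succ j' =>
      rw [fm_zs, Dmat, dif_neg (by simp only [Fin.val_zero, Fin.val_succ]; omega)]
  | succ i' =>
    induction j using Fin.cases with
    | zero =>
      rw [fm_sz, Dmat, dif_neg (by simp only [Fin.val_zero, Fin.val_succ]; omega)]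
    | succ j' =>
      rw [fm_ss, Dmat, Dmat]
      by_cases h : (i' : ℕ) = (j' : ℕ)
      · have hlt : (i' : ℕ) < min m n := by
          have h1 := i'.isLt; have h2 := j'.isLt; omega
        rw [dif_pos (by simp only [Fin.val_succ]; omega), dif_pos h]
        have hc : ∀ pf : ((Fin.succ i' : Fin (m+1)) : ℕ) < min (m+1) (n+1),
            Fin.cast (Nat.succ_min_succ m n) ⟨((Fin.succ i' : Fin (m+1)) : ℕ), pf⟩
              = Fin.succ ⟨(i' : ℕ), hlt⟩ := fun pf => Fin.ext (by simp)
        rw [hc, Fin.cons_succ]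
      · rw [dif_neg (by simp only [Fin.val_succ]; omega), dif_neg h]

lemma antitone_cons {M : ℕ} (a : ℝ) (σ : Fin M → ℝ) (hσ : Antitone σ)
    (hle : ∀ i, σ i ≤ a) : Antitone (Fin.cons (α := fun _ => ℝ) a σ) := by
  intro i j hij
  induction j using Fin.cases with
  | zero =>
    have : i = 0 := le_antisymm hij (Fin.zero_le i)
    subst this
    exact le_refl _
  | succ j' =>
    induction i using Fin.cases with
    | zero => rw [Fin.cons_succ, Fin.cons_zero]; exact hle j'
    | succ i' =>
      rw [Fin.cons_succ, Fin.cons_succ]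
      exact hσ (Fin.succ_le_succ_iff.mp hij)

lemma Nsq_eq_zero {n : ℕ} {x : Fin n → Quat} (h : Nsq x = 0) : ∀ i, x i = 0 := by
  intro i
  have h1 : ‖x i‖^2 ≤ 0 := by
    rw [← h, Nsq]
    exact Finset.single_le_sum (f := fun i => ‖x i‖^2) (fun i _ => sq_nonneg _)
      (Finset.mem_univ i)
  have h2 : ‖x i‖^2 = 0 := le_antisymm h1 (sq_nonneg _)
  rwa [pow_eq_zero_iff (by norm_num), norm_eq_zero] at h2

lemma Nsq_cons_zero {n : ℕ} (y : Fin n → Quat) :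
    Nsq (Fin.cons (α := fun _ => Quat) 0 y) = Nsq y := by
  rw [Nsq, Fin.sum_univ_succ]
  simp [Nsq]

lemma Nsq_smul {n : ℕ} (r : ℝ) (x : Fin n → Quat) :
    Nsq (fun i => r • x i) = r^2 * Nsq x := by
  rw [Nsq, Nsq, Finset.mul_sum]
  refine Finset.sum_congr rfl fun i _ => ?_
  rw [norm_smul, Real.norm_eq_abs, mul_pow, sq_abs]

lemma le_of_sq_le_sq {a b : ℝ} (ha : 0 ≤ a) (hb : 0 ≤ b) (h : a^2 ≤ b^2) : a ≤ b := by
  nlinarith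

set_option maxHeartbeats 1000000 in
lemma main : ∀ (k m n : ℕ), min m n = k → ∀ A : Matrix (Fin m) (Fin n) Quat,
    ∃ (U : Matrix (Fin m) (Fin m) Quat) (V : Matrix (Fin n) (Fin n) Quat)
      (σ : Fin (min m n) → ℝ),
      IsQUnitary U ∧ IsQUnitary V ∧ Antitone σ ∧ (∀ i, 0 ≤ σ i) ∧
      A = U * Dmat σ * Vᴴ ∧
      (∀ i : Fin (min m n), ∃ x : Fin n → Quat, Nsq x = 1 ∧ (σ i)^2 ≤ Nsq (A.mulVec x)) := by
  intro k
  induction k with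
  | zero =>
    intro m n hmn A
    refine ⟨1, 1, fun _ => 0, isQUnitary_one, isQUnitary_one,
      antitone_const, fun i => le_refl 0, ?_, ?_⟩
    · rw [Matrix.conjTranspose_one, Matrix.one_mul, Matrix.mul_one]
      refine Matrix.ext fun i j => ?_
      rcases Nat.min_eq_zero_iff.mp hmn with h | h
      · subst h; exact i.elim0
      · subst h; exact j.elim0
    · intro i
      exact absurd i.isLt (by omega)
  | succ k ih =>
    intro m n hmn A
    rcases m with _ | m'
    · exact absurd hmn (by omega)
    rcases n with _ | n'
    · exact absurd hmn (by omega)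
    have hmink : min m' n' = k := by
      rw [Nat.succ_min_succ] at hmn; omega
    obtain ⟨v₁, hv₁, hmax⟩ := exists_max A
    set s := Real.sqrt (Nsq (A.mulVec v₁)) with hs
    have hs0 : 0 ≤ s := Real.sqrt_nonneg _
    have hssq : s^2 = Nsq (A.mulVec v₁) := Real.sq_sqrt (Nsq_nonneg _)
    by_cases hAz : Nsq (A.mulVec v₁) = 0
    · -- A = 0
      have hcol : ∀ j i, A.mulVec (fun l => if l = j then 1 else 0) i = A i j := by
        intro j i
        rw [Matrix.mulVec, dotProduct]
        rw [show (∑ l, A i l * (if l = j then 1 else 0)) = ∑ l, (if l = j then A i l else 0)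
          from Finset.sum_congr rfl fun l _ => by split <;> simp]
        rw [Finset.sum_ite_eq' Finset.univ j (fun l => A i l)]
        simp
      have hA0 : ∀ i j, A i j = 0 := by
        intro i j
        have h1 : Nsq (A.mulVec (fun l => if l = j then 1 else 0)) ≤ 0 := by
          rw [← hAz]; exact hmax _ (Nsq_basis j)
        have h2 := Nsq_eq_zero (le_antisymm h1 (Nsq_nonneg _)) i
        rwa [hcol j i] at h2
      refine ⟨1, 1, fun _ => 0, isQUnitary_one, isQUnitary_one,
        antitone_const, fun i => le_refl 0, ?_, ?_⟩
      · rw [Matrix.conjTranspose_one, Matrix.one_mul, Matrix.mul_one]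
        refine Matrix.ext fun i j => ?_
        rw [hA0 i j, Dmat]
        split <;> simp
      · intro i
        refine ⟨fun l => if l = 0 then 1 else 0, Nsq_basis 0, ?_⟩
        simpa using Nsq_nonneg (A.mulVec (fun l => if l = 0 then 1 else 0))
    · -- main case
      have hspos : 0 < s := Real.sqrt_pos.mpr (lt_of_le_of_ne (Nsq_nonneg _) (Ne.symm hAz))
      set u₁ : Fin (m'+1) → Quat := fun i => (s⁻¹ : ℝ) • (A.mulVec v₁ i) with hu₁
      have hNu₁ : Nsq u₁ = 1 := by
        rw [hu₁, Nsq_smul, ← hssq]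
        field_simp
      obtain ⟨U₀, hU₀, hU₀col⟩ := exists_unitary_col u₁ hNu₁
      obtain ⟨V₀, hV₀, hV₀col⟩ := exists_unitary_col v₁ hv₁
      set B := U₀ᴴ * A * V₀ with hB
      have hAB : A = U₀ * B * V₀ᴴ := by
        rw [hB]
        calc A = (U₀ * U₀ᴴ) * A * (V₀ * V₀ᴴ) := by
              rw [hU₀.2, hV₀.2, Matrix.one_mul, Matrix.mul_one]
        _ = U₀ * (U₀ᴴ * A * V₀) * V₀ᴴ := by simp only [Matrix.mul_assoc]
      have hAv : ∀ i, A.mulVec v₁ i = s • u₁ i := by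
        intro i
        rw [hu₁, smul_smul, mul_inv_cancel₀ (ne_of_gt hspos), one_smul]
      have hBcol : ∀ i, B i 0 = if i = 0 then ((s:ℝ):Quat) else 0 := by
        intro i
        have hAV : ∀ l, (A * V₀) l 0 = s • u₁ l := by
          intro l
          rw [Matrix.mul_apply, ← hAv l, Matrix.mulVec, dotProduct]
          exact Finset.sum_congr rfl fun j _ => by rw [hV₀col j]
        rw [hB, Matrix.mul_assoc, Matrix.mul_apply]
        rw [Finset.sum_congr rfl fun l _ => by
          rw [hAV l, Matrix.conjTranspose_apply, mul_smul_comm, ← hU₀col l]]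
        rw [← Finset.smul_sum]
        have : (∑ l, star (U₀ l i) * U₀ l 0) = (U₀ᴴ * U₀) i 0 := by
          rw [Matrix.mul_apply]
          exact Finset.sum_congr rfl fun l _ => by rw [Matrix.conjTranspose_apply]
        rw [this, hU₀.1, Matrix.one_apply]
        split <;> simp [← Quaternion.coe_mul_eq_smul]
      have hBmax : ∀ x, Nsq x = 1 → Nsq (B.mulVec x) ≤ s^2 := by
        intro x hx
        have h1 : B.mulVec x = U₀ᴴ.mulVec (A.mulVec (V₀.mulVec x)) := by
          rw [Matrix.mulVec_mulVec, Matrix.mulVec_mulVec, hB, Matrix.mul_assoc]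
        have hUH : (U₀ᴴ)ᴴ * U₀ᴴ = 1 := by
          rw [Matrix.conjTranspose_conjTranspose]; exact hU₀.2
        rw [h1, Nsq_mulVec U₀ᴴ hUH]
        rw [hssq]
        exact hmax _ (by rw [Nsq_mulVec V₀ hV₀.1, hx])
      have hBrow : ∀ j : Fin n', B 0 (Fin.succ j) = 0 := by
        set w : Fin n' → Quat := fun j => B 0 (Fin.succ j) with hw
        set t := Real.sqrt (s^2 + Nsq w) with ht
        have htsq : t^2 = s^2 + Nsq w := Real.sq_sqrt (add_nonneg (sq_nonneg s) (Nsq_nonneg w))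
        have htpos : 0 < t := Real.sqrt_pos.mpr (by nlinarith [Nsq_nonneg w])
        set x : Fin (n'+1) → Quat :=
          fun j => (t⁻¹:ℝ) • Fin.cases ((s:ℝ):Quat) (fun j' => star (w j')) j with hx
        have hNx : Nsq x = 1 := by
          rw [hx, Nsq_smul]
          have : Nsq (fun j => Fin.cases ((s:ℝ):Quat) (fun j' => star (w j')) j)
              = s^2 + Nsq w := by
            have hNsqw : (∑ j' : Fin n', ‖w j'‖^2) = Nsq w := rfl
            rw [Nsq, Fin.sum_univ_succ]
            simp only [Fin.cases_zero, Fin.cases_succ, norm_star, Quaternion.norm_coe,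
              Real.norm_eq_abs, sq_abs]
            rw [hNsqw]
          rw [this, ← htsq]
          field_simp
        have hBx0 : B.mulVec x 0 = ((t:ℝ):Quat) := by
          rw [Matrix.mulVec, dotProduct, Fin.sum_univ_succ]
          simp only [hx, Fin.cases_zero, Fin.cases_succ]
          rw [hBcol 0, if_pos rfl]
          rw [show ((s:ℝ):Quat) * (t⁻¹:ℝ) • ((s:ℝ):Quat) = (t⁻¹:ℝ) • ((s^2 : ℝ):Quat) by
            rw [mul_smul_comm, ← Quaternion.coe_mul, sq]]
          rw [Finset.sum_congr rfl fun j _ => by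
            rw [show B 0 (Fin.succ j) * (t⁻¹:ℝ) • star (w j)
                = (t⁻¹:ℝ) • ((‖w j‖^2 : ℝ) : Quat) by
              rw [mul_smul_comm]
              congr 1
              exact mul_star_self' (w j)]]
          have hNsqw : (∑ j' : Fin n', ((‖w j'‖^2 : ℝ) : Quat)) = ((Nsq w : ℝ) : Quat) := by
            rw [Nsq, coe_sum]
          rw [← Finset.smul_sum, hNsqw, ← smul_add,
            show ((s^2:ℝ):Quat) + ((Nsq w : ℝ):Quat) = ((s^2 + Nsq w : ℝ):Quat) by push_cast; ring,
            ← htsq, ← Quaternion.coe_mul_eq_smul, ← Quaternion.coe_mul]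
          congr 1
          rw [sq]
          field_simp
        have hts : t^2 ≤ s^2 := by
          have h1 : ‖B.mulVec x 0‖^2 ≤ Nsq (B.mulVec x) := by
            rw [Nsq]
            exact Finset.single_le_sum (f := fun i => ‖B.mulVec x i‖^2)
              (fun i _ => sq_nonneg _) (Finset.mem_univ 0)
          rw [hBx0, Quaternion.norm_coe, Real.norm_eq_abs, sq_abs] at h1
          exact le_trans h1 (hBmax x hNx)
        have hNw : Nsq w = 0 := by nlinarith [Nsq_nonneg w]
        exact fun j => Nsq_eq_zero hNw j
      set B' : Matrix (Fin m') (Fin n') Quat := fun i j => B (Fin.succ i) (Fin.succ j) with hB'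
      have hBfm : B = fm ((s:ℝ):Quat) B' := by
        refine Matrix.ext fun i j => ?_
        induction i using Fin.cases with
        | zero =>
          induction j using Fin.cases with
          | zero => rw [fm_zz, hBcol 0, if_pos rfl]
          | succ j' => rw [fm_zs, hBrow j']
        | succ i' =>
          induction j using Fin.cases with
          | zero => rw [fm_sz, hBcol _, if_neg (Fin.succ_ne_zero i')]
          | succ j' => rw [fm_ss]
      obtain ⟨U', V', σ', hU', hV', hanti', hnn', hfac', hbnd'⟩ := ih m' n' hmink B'
      have hconsmul : ∀ x' : Fin n' → Quat,
          B.mulVec (Fin.cons (α := fun _ => Quat) 0 x')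
            = Fin.cons (α := fun _ => Quat) 0 (B'.mulVec x') := by
        intro x'
        funext i0
        induction i0 using Fin.cases with
        | zero =>
          rw [Fin.cons_zero, Matrix.mulVec, dotProduct, Fin.sum_univ_succ, Fin.cons_zero,
            mul_zero, zero_add]
          rw [Finset.sum_congr rfl fun j _ => by rw [Fin.cons_succ, hBrow j, zero_mul]]
          simp
        | succ i' =>
          rw [Fin.cons_succ, Matrix.mulVec, dotProduct, Fin.sum_univ_succ, Fin.cons_zero,
            mul_zero, zero_add, Matrix.mulVec, dotProduct]
          exact Finset.sum_congr rfl fun j _ => by rw [Fin.cons_succ, hB']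
      have hσle : ∀ i, σ' i ≤ s := by
        intro i
        obtain ⟨x', hx', hle⟩ := hbnd' i
        have h1 : Nsq (B'.mulVec x') ≤ s^2 := by
          rw [← Nsq_cons_zero (B'.mulVec x'), ← hconsmul x']
          exact hBmax _ (by rw [Nsq_cons_zero, hx'])
        exact le_of_sq_le_sq (hnn' i) hs0 (le_trans hle h1)
      set σtot : Fin (min (m'+1) (n'+1)) → ℝ :=
        fun i => Fin.cons (α := fun _ => ℝ) s σ' (Fin.cast (Nat.succ_min_succ m' n') i)
        with hσtot
      have hAVU : A * V₀ = U₀ * B := by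
        rw [hAB]
        calc U₀ * B * V₀ᴴ * V₀ = U₀ * B * (V₀ᴴ * V₀) := by simp only [Matrix.mul_assoc]
        _ = U₀ * B := by rw [hV₀.1, Matrix.mul_one]
      refine ⟨U₀ * fm 1 U', V₀ * fm 1 V', σtot,
        isQUnitary_mul hU₀ (fm_unitary hU'), isQUnitary_mul hV₀ (fm_unitary hV'),
        ?_, ?_, ?_, ?_⟩
      · intro i j hij
        exact antitone_cons s σ' hanti' hσle
          (show Fin.cast _ i ≤ Fin.cast _ j from hij)
      · intro i
        show 0 ≤ Fin.cons (α := fun _ => ℝ) s σ' (Fin.cast (Nat.succ_min_succ m' n') i)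
        rcases Fin.eq_zero_or_eq_succ (Fin.cast (Nat.succ_min_succ m' n') i) with hc | ⟨j, hc⟩
        · rw [hc, Fin.cons_zero]; exact hs0
        · rw [hc, Fin.cons_succ]; exact hnn' j
      · have hD : Dmat σtot = fm ((s:ℝ):Quat) (Dmat σ') := Dmat_cons s σ'
        rw [hD, Matrix.conjTranspose_mul, fm_conjTranspose, star_one]
        calc A = U₀ * B * V₀ᴴ := hAB
        _ = U₀ * fm ((s:ℝ):Quat) (U' * Dmat σ' * V'ᴴ) * V₀ᴴ := by rw [hBfm, ← hfac']
        _ = U₀ * (fm 1 U' * fm ((s:ℝ):Quat) (Dmat σ') * fm 1 V'ᴴ) * V₀ᴴ := by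
            rw [fm_mul, fm_mul, one_mul, mul_one]
        _ = U₀ * fm 1 U' * fm ((s:ℝ):Quat) (Dmat σ') * (fm 1 V'ᴴ * V₀ᴴ) := by
            simp only [Matrix.mul_assoc]
      · intro i
        rcases Fin.eq_zero_or_eq_succ (Fin.cast (Nat.succ_min_succ m' n') i) with hc | ⟨j, hc⟩
        · refine ⟨v₁, hv₁, ?_⟩
          rw [hσtot]
          simp only [hc, Fin.cons_zero]
          rw [hssq]
        · obtain ⟨x', hx', hle⟩ := hbnd' j
          refine ⟨V₀.mulVec (Fin.cons (α := fun _ => Quat) 0 x'), ?_, ?_⟩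
          · rw [Nsq_mulVec V₀ hV₀.1, Nsq_cons_zero, hx']
          · rw [hσtot]
            simp only [hc, Fin.cons_succ]
            rw [Matrix.mulVec_mulVec, hAVU, ← Matrix.mulVec_mulVec, hconsmul,
              Nsq_mulVec U₀ hU₀.1, Nsq_cons_zero]
            exact hle

end QSVD

theorem qsvd_exists (m n : ℕ) (A : Matrix (Fin m) (Fin n) Quat) :
    ∃ (U : Matrix (Fin m) (Fin m) Quat) (V : Matrix (Fin n) (Fin n) Quat)
      (σ : Fin (min m n) → ℝ),
      IsQUnitary U ∧ IsQUnitary V ∧ Antitone σ ∧ (∀ i, 0 ≤ σ i) ∧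
      A = U * Dmat σ * Vᴴ := by
  obtain ⟨U, V, σ, h1, h2, h3, h4, h5, _⟩ := QSVD.main (min m n) m n rfl A
  exact ⟨U, V, σ, h1, h2, h3, h4, h5⟩
end
end

section
/- Closed form of the ordered ℓ1-minus-ℓ2 proximal problem: let y ∈ ℝ^m satisfy y₁ ≥ y₂ ≥ … ≥ y_m ≥ 0, let λ > 0, α > 0, and suppose y₁ > λ. Define z ∈ ℝ^m by z_i = max(y_i − λ, 0) and x* = ((‖z‖₂ + αλ)/‖z‖₂) · z. Then x* satisfies x*₁ ≥ … ≥ x*_m ≥ 0, and for every x ∈ ℝ^m with x₁ ≥ x₂ ≥ … ≥ x_m ≥ 0 one has (1/2)‖y − x‖₂² + λ(‖x‖₁ − α‖x‖₂) ≥ (1/2)‖y − x*‖₂² + λ(‖x*‖₁ − α‖x*‖₂). -/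
open Matrix BigOperators Filter

noncomputable section

theorem ordered_l1_minus_l2_prox (m : ℕ) (hm : 0 < m) (y : Fin m → ℝ)
    (hmono : Antitone y) (hnn : ∀ i, 0 ≤ y i)
    (lam alph : ℝ) (hlam : 0 < lam) (halph : 0 < alph)
    (hy1 : lam < y ⟨0, hm⟩) :
    let z : Fin m → ℝ := fun i => max (y i - lam) 0
    let nz : ℝ := Real.sqrt (∑ i, z i ^ 2)
    let xstar : Fin m → ℝ := fun i => ((nz + alph * lam) / nz) * z i
    (Antitone xstar ∧ ∀ i, 0 ≤ xstar i) ∧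
    ∀ x : Fin m → ℝ, Antitone x → (∀ i, 0 ≤ x i) →
      (1 / 2) * (∑ i, (y i - xstar i) ^ 2) +
        lam * ((∑ i, |xstar i|) - alph * Real.sqrt (∑ i, xstar i ^ 2)) ≤
      (1 / 2) * (∑ i, (y i - x i) ^ 2) +
        lam * ((∑ i, |x i|) - alph * Real.sqrt (∑ i, x i ^ 2)) := by
  intro z nz xstar
  have hzdef : ∀ i, z i = max (y i - lam) 0 := fun _ => rfl
  have hxdef : ∀ i, xstar i = ((nz + alph * lam) / nz) * z i := fun _ => rfl
  have hznn : ∀ i, 0 ≤ z i := fun i => le_max_right _ _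
  have hzanti : Antitone z := fun i j hij => by
    rw [hzdef, hzdef]
    exact max_le_max (by have := hmono hij; linarith) le_rfl
  have hz0 : 0 < z ⟨0, hm⟩ := by
    rw [hzdef]; exact lt_max_iff.2 (Or.inl (by linarith))
  have hsum_pos : 0 < ∑ i, z i ^ 2 := by
    apply Finset.sum_pos' (fun i _ => sq_nonneg _)
    exact ⟨⟨0, hm⟩, Finset.mem_univ _, by positivity⟩
  have hnz_pos : 0 < nz := Real.sqrt_pos.2 hsum_pos
  have hnz_sq : nz ^ 2 = ∑ i, z i ^ 2 := Real.sq_sqrt hsum_pos.le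
  have hApos : 0 < nz + alph * lam := by positivity
  have hcpos : 0 < (nz + alph * lam) / nz := div_pos hApos hnz_pos
  have hxnn : ∀ i, 0 ≤ xstar i := fun i => mul_nonneg hcpos.le (hznn i)
  have hxanti : Antitone xstar := fun i j hij => by
    rw [hxdef, hxdef]
    exact mul_le_mul_of_nonneg_left (hzanti hij) hcpos.le
  have expand : ∀ v : Fin m → ℝ, (∀ i, 0 ≤ v i) →
      (1 / 2) * (∑ i, (y i - v i) ^ 2) +
        lam * ((∑ i, |v i|) - alph * Real.sqrt (∑ i, v i ^ 2))
      = (1 / 2) * (∑ i, y i ^ 2) + ((1 / 2) * (∑ i, v i ^ 2)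
          - (∑ i, (y i - lam) * v i) - lam * alph * Real.sqrt (∑ i, v i ^ 2)) := by
    intro v hv
    have e1 : ∑ i, (y i - v i) ^ 2
        = (∑ i, y i ^ 2) - (∑ i, 2 * (y i * v i)) + (∑ i, v i ^ 2) := by
      rw [← Finset.sum_sub_distrib, ← Finset.sum_add_distrib]
      exact Finset.sum_congr rfl fun i _ => by ring
    have e2 : ∑ i, (y i - lam) * v i = (∑ i, y i * v i) - lam * (∑ i, v i) := by
      rw [Finset.mul_sum, ← Finset.sum_sub_distrib]
      exact Finset.sum_congr rfl fun i _ => by ring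
    have e3 : ∑ i, |v i| = ∑ i, v i :=
      Finset.sum_congr rfl fun i _ => abs_of_nonneg (hv i)
    have e4 : ∑ i, 2 * (y i * v i) = 2 * ∑ i, y i * v i := by rw [Finset.mul_sum]
    rw [e1, e2, e3, e4]; ring
  have key : ∀ v : Fin m → ℝ, (∀ i, 0 ≤ v i) →
      -(1 / 2) * (nz + alph * lam) ^ 2 ≤ (1 / 2) * (∑ i, v i ^ 2)
        - (∑ i, (y i - lam) * v i) - lam * alph * Real.sqrt (∑ i, v i ^ 2) := by
    intro v hv
    set r := Real.sqrt (∑ i, v i ^ 2) with hr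
    have hr0 : 0 ≤ r := Real.sqrt_nonneg _
    have hr2 : r ^ 2 = ∑ i, v i ^ 2 :=
      Real.sq_sqrt (Finset.sum_nonneg fun i _ => sq_nonneg _)
    have h1 : ∑ i, (y i - lam) * v i ≤ ∑ i, z i * v i :=
      Finset.sum_le_sum fun i _ =>
        mul_le_mul_of_nonneg_right (by rw [hzdef]; exact le_max_left _ _) (hv i)
    have h2 : ∑ i, z i * v i ≤ nz * r := by
      have hcs := Finset.sum_mul_sq_le_sq_mul_sq Finset.univ z v
      have hpn : 0 ≤ ∑ i, z i * v i :=
        Finset.sum_nonneg fun i _ => mul_nonneg (hznn i) (hv i)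
      nlinarith [mul_nonneg hnz_pos.le hr0]
    nlinarith [sq_nonneg (r - (nz + alph * lam))]
  have hxsq : ∑ i, xstar i ^ 2 = ((nz + alph * lam) / nz) ^ 2 * (nz ^ 2) := by
    rw [hnz_sq, Finset.mul_sum]
    exact Finset.sum_congr rfl fun i _ => by rw [hxdef]; ring
  have hxnorm : Real.sqrt (∑ i, xstar i ^ 2) = nz + alph * lam := by
    have h5 : ((nz + alph * lam) / nz) ^ 2 * nz ^ 2 = (nz + alph * lam) ^ 2 := by
      field_simp
    rw [hxsq, h5, Real.sqrt_sq hApos.le]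
  have hzw : ∀ i, (y i - lam) * z i = z i ^ 2 := by
    intro i
    rw [hzdef i]
    rcases le_or_gt (y i - lam) 0 with h | h
    · rw [max_eq_right h]; ring
    · rw [max_eq_left h.le]; ring
  have hcross : ∑ i, (y i - lam) * xstar i = ((nz + alph * lam) / nz) * nz ^ 2 := by
    rw [hnz_sq, Finset.mul_sum]
    exact Finset.sum_congr rfl fun i _ => by rw [hxdef, ← hzw i]; ring
  have hQx : (1 / 2) * (∑ i, xstar i ^ 2) - (∑ i, (y i - lam) * xstar i)
      - lam * alph * Real.sqrt (∑ i, xstar i ^ 2)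
      = -(1 / 2) * (nz + alph * lam) ^ 2 := by
    rw [hxnorm, hxsq, hcross]
    field_simp
    ring
  refine ⟨⟨hxanti, hxnn⟩, ?_⟩
  intro x _ hxn
  rw [expand xstar hxnn, expand x hxn, hQx]
  linarith [key x hxn]
end
end

section
/- Von Neumann trace inequality for quaternion matrices: let X and Y be m×n quaternion matrices with decompositions X = P * D(s) * Qᴴ and Y = U * D(t) * Vᴴ, where P, U are unitary m×m quaternion matrices, Q, V are unitary n×n quaternion matrices, and s, t ∈ ℝ^M (M = min(m,n)) satisfy s₁ ≥ … ≥ s_M ≥ 0 and t₁ ≥ … ≥ t_M ≥ 0. Then the real part of the trace of Xᴴ * Y satisfies Re(tr(Xᴴ * Y)) ≤ ∑_{i=1}^{M} s_i t_i. -/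
open Matrix BigOperators Filter

noncomputable section

lemma quat_re_sum {α : Type*} (s : Finset α) (f : α → Quat) :
    (∑ i ∈ s, f i).re = ∑ i ∈ s, (f i).re :=
  map_sum (QuaternionAlgebra.reₗ (-1:ℝ) (0:ℝ) (-1:ℝ)) f s

lemma quat_re_mul_comm (a b : Quat) : (a * b).re = (b * a).re := by
  simp only [Quaternion.re_mul]; ring

lemma quat_re_le_norm (a : Quat) : a.re ≤ ‖a‖ := by
  have h1 : ‖a‖ ^ 2 = Quaternion.normSq a := by
    rw [Quaternion.normSq_eq_norm_mul_self, sq]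
  have h2 : a.re ^ 2 ≤ ‖a‖ ^ 2 := by
    rw [h1, Quaternion.normSq_def']
    nlinarith [sq_nonneg a.imI, sq_nonneg a.imJ, sq_nonneg a.imK]
  nlinarith [norm_nonneg a, sq_nonneg (a.re - ‖a‖), sq_nonneg (a.re + ‖a‖)]

lemma quat_re_mul_le (a b : Quat) : (a * b).re ≤ ‖a‖ * ‖b‖ :=
  (quat_re_le_norm _).trans (le_of_eq (norm_mul a b))

lemma quat_mul_star_re (a : Quat) : (a * star a).re = ‖a‖ ^ 2 := by
  rw [← Quaternion.normSq_def, Quaternion.normSq_eq_norm_mul_self, sq]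

lemma quat_star_mul_re (a : Quat) : (star a * a).re = ‖a‖ ^ 2 := by
  have h : star a * a = star a * star (star a) := by rw [star_star]
  rw [h, ← Quaternion.normSq_def, Quaternion.normSq_star,
    Quaternion.normSq_eq_norm_mul_self, sq]

lemma quat_coe_mul_re (r : ℝ) (a : Quat) : ((r : Quat) * a).re = r * a.re := by
  simp [Quaternion.re_mul]
lemma sum_castLE {M n : ℕ} {α : Type*} [AddCommMonoid α] (h : M ≤ n) (g : Fin n → α)
    (hg : ∀ j : Fin n, M ≤ (j : ℕ) → g j = 0) :
    ∑ j, g j = ∑ k : Fin M, g (Fin.castLE h k) := by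
  classical
  have hmap : ∑ k : Fin M, g (Fin.castLE h k)
      = ∑ j ∈ Finset.univ.map (Fin.castLEEmb h), g j := by
    rw [Finset.sum_map]; rfl
  rw [hmap]
  refine (Finset.sum_subset (Finset.subset_univ _) (fun j _ hj => ?_)).symm
  refine hg j ?_
  by_contra hlt
  push_neg at hlt
  exact hj (Finset.mem_map.2 ⟨⟨(j : ℕ), hlt⟩, Finset.mem_univ _, Fin.ext rfl⟩)

lemma sum_castLE_le {M n : ℕ} (h : M ≤ n) (g : Fin n → ℝ) (hg : ∀ j, 0 ≤ g j) :
    ∑ k : Fin M, g (Fin.castLE h k) ≤ ∑ j, g j := by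
  have hmap : ∑ k : Fin M, g (Fin.castLE h k)
      = ∑ j ∈ Finset.univ.map (Fin.castLEEmb h), g j := by
    rw [Finset.sum_map]; rfl
  rw [hmap]
  exact Finset.sum_le_sum_of_subset_of_nonneg (Finset.subset_univ _) (fun j _ _ => hg j)

lemma Dmat_star {m n : ℕ} (s : Fin (min m n) → ℝ) (i : Fin m) (j : Fin n) :
    star (Dmat s i j) = Dmat s i j := by
  unfold Dmat; split
  · exact Quaternion.star_coe _
  · exact star_zero _

lemma Dmat_comm {m n : ℕ} (s : Fin (min m n) → ℝ) (i : Fin m) (j : Fin n) (q : Quat) :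
    q * Dmat s i j = Dmat s i j * q := by
  unfold Dmat; split
  · exact (Quaternion.coe_commutes _ _).symm
  · simp

lemma Dmat_sum {m n : ℕ} (s : Fin (min m n) → ℝ) (F : Fin m → Fin n → Quat) :
    ∑ j : Fin n, ∑ i : Fin m, Dmat s i j * F i j
      = ∑ k : Fin (min m n), ((s k : ℝ) : Quat) *
          F (Fin.castLE (Nat.min_le_left m n) k) (Fin.castLE (Nat.min_le_right m n) k) := by
  rw [sum_castLE (Nat.min_le_right m n)
      (fun j => ∑ i : Fin m, Dmat s i j * F i j) ?_]
  · refine Finset.sum_congr rfl (fun k _ => ?_)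
    rw [Finset.sum_eq_single (Fin.castLE (Nat.min_le_left m n) k)]
    · congr 1
      show Dmat s _ _ = _
      unfold Dmat
      simp
    · intro i _ hne
      have hv : (i : ℕ) ≠ (k : ℕ) := fun hv => hne (Fin.ext hv)
      show Dmat s i _ * _ = 0
      unfold Dmat
      simp only [Fin.coe_castLE]
      rw [dif_neg hv, zero_mul]
    · intro hmem; exact absurd (Finset.mem_univ _) hmem
  · intro j hj
    refine Finset.sum_eq_zero (fun i _ => ?_)
    have hv : (i : ℕ) ≠ (j : ℕ) := by
      have h1 := i.isLt
      have h2 := j.isLt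
      omega
    show Dmat s i j * _ = 0
    unfold Dmat
    rw [dif_neg hv, zero_mul]

lemma retrace_comm {p q : ℕ} (A : Matrix (Fin p) (Fin q) Quat) (B : Matrix (Fin q) (Fin p) Quat) :
    (Matrix.trace (A * B)).re = (Matrix.trace (B * A)).re := by
  simp only [Matrix.trace, Matrix.diag, Matrix.mul_apply, quat_re_sum]
  rw [Finset.sum_comm]
  exact Finset.sum_congr rfl fun i _ => Finset.sum_congr rfl fun j _ => quat_re_mul_comm _ _

lemma trace_DH_mul {m n : ℕ} (s : Fin (min m n) → ℝ) (C : Matrix (Fin m) (Fin n) Quat) :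
    Matrix.trace ((Dmat s)ᴴ * C) = ∑ k : Fin (min m n), ((s k : ℝ) : Quat) *
        C (Fin.castLE (Nat.min_le_left m n) k) (Fin.castLE (Nat.min_le_right m n) k) := by
  simp only [Matrix.trace, Matrix.diag, Matrix.mul_apply, Matrix.conjTranspose_apply]
  calc ∑ j : Fin n, ∑ i : Fin m, star (Dmat s i j) * C i j
      = ∑ j : Fin n, ∑ i : Fin m, Dmat s i j * C i j := by
        simp only [Dmat_star]
    _ = _ := Dmat_sum s C

lemma entry_expand {m n : ℕ} (t : Fin (min m n) → ℝ)
    (A : Matrix (Fin m) (Fin m) Quat) (B : Matrix (Fin n) (Fin n) Quat)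
    (i : Fin m) (j : Fin n) :
    (A * Dmat t * B) i j = ∑ l : Fin (min m n), ((t l : ℝ) : Quat) *
        (A i (Fin.castLE (Nat.min_le_left m n) l) * B (Fin.castLE (Nat.min_le_right m n) l) j) := by
  simp only [Matrix.mul_apply]
  calc ∑ b : Fin n, (∑ a : Fin m, A i a * Dmat t a b) * B b j
      = ∑ b : Fin n, ∑ a : Fin m, Dmat t a b * (A i a * B b j) := by
        refine Finset.sum_congr rfl fun b _ => ?_
        rw [Finset.sum_mul]
        refine Finset.sum_congr rfl fun a _ => ?_
        rw [mul_assoc, ← Dmat_comm, ← mul_assoc]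
        exact Dmat_comm t a b _
    _ = _ := Dmat_sum t _

lemma sum4_comm {α : Type*} [AddCommMonoid α] (s : Finset ℕ) (f : ℕ → ℕ → ℕ → ℕ → α) :
    ∑ i ∈ s, ∑ j ∈ s, ∑ k ∈ s, ∑ l ∈ s, f i j k l
      = ∑ k ∈ s, ∑ l ∈ s, ∑ i ∈ s, ∑ j ∈ s, f i j k l := by
  calc ∑ i ∈ s, ∑ j ∈ s, ∑ k ∈ s, ∑ l ∈ s, f i j k l
      = ∑ i ∈ s, ∑ k ∈ s, ∑ j ∈ s, ∑ l ∈ s, f i j k l := by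
        exact Finset.sum_congr rfl fun i _ => Finset.sum_comm
    _ = ∑ k ∈ s, ∑ i ∈ s, ∑ j ∈ s, ∑ l ∈ s, f i j k l := Finset.sum_comm
    _ = ∑ k ∈ s, ∑ i ∈ s, ∑ l ∈ s, ∑ j ∈ s, f i j k l := by
        exact Finset.sum_congr rfl fun k _ => Finset.sum_congr rfl fun i _ => Finset.sum_comm
    _ = ∑ k ∈ s, ∑ l ∈ s, ∑ i ∈ s, ∑ j ∈ s, f i j k l := by
        exact Finset.sum_congr rfl fun k _ => Finset.sum_comm

lemma sum3_comm {α : Type*} [AddCommMonoid α] (s : Finset ℕ) (f : ℕ → ℕ → ℕ → α) :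
    ∑ i ∈ s, ∑ k ∈ s, ∑ l ∈ s, f i k l
      = ∑ k ∈ s, ∑ l ∈ s, ∑ i ∈ s, f i k l := by
  calc ∑ i ∈ s, ∑ k ∈ s, ∑ l ∈ s, f i k l
      = ∑ k ∈ s, ∑ i ∈ s, ∑ l ∈ s, f i k l := Finset.sum_comm
    _ = ∑ k ∈ s, ∑ l ∈ s, ∑ i ∈ s, f i k l := by
        exact Finset.sum_congr rfl fun k _ => Finset.sum_comm

lemma key_ineq (M : ℕ) (S T : ℕ → ℝ) (D : ℕ → ℕ → ℝ)
    (hS1 : ∀ k, S (k+1) ≤ S k) (hSM : ∀ k, M ≤ k → S k = 0)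
    (hT1 : ∀ k, T (k+1) ≤ T k) (hTM : ∀ k, M ≤ k → T k = 0)
    (hD0 : ∀ i j, 0 ≤ D i j)
    (hrow : ∀ i, ∑ j ∈ Finset.range M, D i j ≤ 1)
    (hcol : ∀ j, ∑ i ∈ Finset.range M, D i j ≤ 1) :
    ∑ i ∈ Finset.range M, ∑ j ∈ Finset.range M, S i * T j * D i j
      ≤ ∑ i ∈ Finset.range M, S i * T i := by
  classical
  have hδ0 : ∀ k, 0 ≤ S k - S (k+1) := fun k => sub_nonneg.2 (hS1 k)
  have hε0 : ∀ k, 0 ≤ T k - T (k+1) := fun k => sub_nonneg.2 (hT1 k)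
  have tel : ∀ (F : ℕ → ℝ), (∀ k, M ≤ k → F k = 0) → ∀ i ∈ Finset.range M,
      F i = ∑ k ∈ Finset.range M, (if i ≤ k then (1:ℝ) else 0) * (F k - F (k+1)) := by
    intro F hFM i hi
    have hstep : ∀ k ∈ Finset.range M, (if i ≤ k then (1:ℝ) else 0) * (F k - F (k+1))
        = (if i ≤ k then F k - F (k+1) else 0) := by
      intro k _; split <;> simp
    rw [Finset.sum_congr rfl hstep, Finset.sum_ite, Finset.sum_const_zero, add_zero]
    have hfil : Finset.filter (fun k => i ≤ k) (Finset.range M) = Finset.Ico i M := by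
      ext k; simp [Finset.mem_Ico, and_comm]
    rw [hfil, Finset.sum_Ico_eq_sub _ (le_of_lt (Finset.mem_range.1 hi)),
      Finset.sum_range_sub' F, Finset.sum_range_sub' F, hFM M le_rfl]
    ring
  have lhs_eq : ∑ i ∈ Finset.range M, ∑ j ∈ Finset.range M, S i * T j * D i j
      = ∑ k ∈ Finset.range M, ∑ l ∈ Finset.range M, (S k - S (k+1)) * (T l - T (l+1)) *
          (∑ i ∈ Finset.range M, ∑ j ∈ Finset.range M,
            (if i ≤ k then (1:ℝ) else 0) * (if j ≤ l then (1:ℝ) else 0) * D i j) := by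
    calc ∑ i ∈ Finset.range M, ∑ j ∈ Finset.range M, S i * T j * D i j
        = ∑ i ∈ Finset.range M, ∑ j ∈ Finset.range M,
            ∑ k ∈ Finset.range M, ∑ l ∈ Finset.range M,
              ((if i ≤ k then (1:ℝ) else 0) * (S k - S (k+1))) *
              ((if j ≤ l then (1:ℝ) else 0) * (T l - T (l+1))) * D i j := by
          refine Finset.sum_congr rfl fun i hi => Finset.sum_congr rfl fun j hj => ?_
          rw [tel S hSM i hi, tel T hTM j hj, Finset.sum_mul_sum, Finset.sum_mul]
          refine Finset.sum_congr rfl fun k _ => ?_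
          rw [Finset.sum_mul]
      _ = ∑ k ∈ Finset.range M, ∑ l ∈ Finset.range M,
            ∑ i ∈ Finset.range M, ∑ j ∈ Finset.range M,
              ((if i ≤ k then (1:ℝ) else 0) * (S k - S (k+1))) *
              ((if j ≤ l then (1:ℝ) else 0) * (T l - T (l+1))) * D i j :=
          sum4_comm _ _
      _ = _ := by
          refine Finset.sum_congr rfl fun k _ => Finset.sum_congr rfl fun l _ => ?_
          simp only [Finset.mul_sum]
          refine Finset.sum_congr rfl fun i _ => Finset.sum_congr rfl fun j _ => ?_
          ring
  have rhs_eq : ∑ i ∈ Finset.range M, S i * T i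
      = ∑ k ∈ Finset.range M, ∑ l ∈ Finset.range M, (S k - S (k+1)) * (T l - T (l+1)) *
          (∑ i ∈ Finset.range M, (if i ≤ k then (1:ℝ) else 0) * (if i ≤ l then (1:ℝ) else 0)) := by
    calc ∑ i ∈ Finset.range M, S i * T i
        = ∑ i ∈ Finset.range M, ∑ k ∈ Finset.range M, ∑ l ∈ Finset.range M,
            ((if i ≤ k then (1:ℝ) else 0) * (S k - S (k+1))) *
            ((if i ≤ l then (1:ℝ) else 0) * (T l - T (l+1))) := by
          refine Finset.sum_congr rfl fun i hi => ?_
          rw [tel S hSM i hi, tel T hTM i hi, Finset.sum_mul_sum]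
      _ = ∑ k ∈ Finset.range M, ∑ l ∈ Finset.range M, ∑ i ∈ Finset.range M,
            ((if i ≤ k then (1:ℝ) else 0) * (S k - S (k+1))) *
            ((if i ≤ l then (1:ℝ) else 0) * (T l - T (l+1))) :=
          sum3_comm _ _
      _ = _ := by
          refine Finset.sum_congr rfl fun k _ => Finset.sum_congr rfl fun l _ => ?_
          simp only [Finset.mul_sum]
          refine Finset.sum_congr rfl fun i _ => ?_
          ring
  rw [lhs_eq, rhs_eq]
  refine Finset.sum_le_sum fun k hk => Finset.sum_le_sum fun l hl => ?_
  refine mul_le_mul_of_nonneg_left ?_ (mul_nonneg (hδ0 k) (hε0 l))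
  have hkM := Finset.mem_range.1 hk
  have hlM := Finset.mem_range.1 hl
  have indcard : ∀ p : ℕ, p < M → ∑ i ∈ Finset.range M, (if i ≤ p then (1:ℝ) else 0)
      = (p + 1 : ℕ) := by
    intro p hp
    rw [Finset.sum_ite, Finset.sum_const, Finset.sum_const_zero, add_zero, nsmul_eq_mul, mul_one]
    have : Finset.filter (fun i => i ≤ p) (Finset.range M) = Finset.range (p + 1) := by
      ext i
      simp only [Finset.mem_filter, Finset.mem_range, Nat.lt_succ_iff]
      omega
    rw [this, Finset.card_range]
  have hN : ∑ i ∈ Finset.range M, (if i ≤ k then (1:ℝ) else 0) * (if i ≤ l then (1:ℝ) else 0)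
      = ((min k l + 1 : ℕ) : ℝ) := by
    have hstep : ∀ i ∈ Finset.range M, (if i ≤ k then (1:ℝ) else 0) * (if i ≤ l then (1:ℝ) else 0)
        = (if i ≤ min k l then (1:ℝ) else 0) := by
      intro i _
      by_cases h1 : i ≤ k <;> by_cases h2 : i ≤ l <;>
        simp [h1, h2, le_min_iff]
    rw [Finset.sum_congr rfl hstep, indcard (min k l) (lt_of_le_of_lt (min_le_left _ _) hkM)]
  have inner_row : ∀ i, ∑ j ∈ Finset.range M,
      (if j ≤ l then (1:ℝ) else 0) * D i j ≤ 1 := by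
    intro i
    refine le_trans (Finset.sum_le_sum fun j _ => ?_) (hrow i)
    split <;> simp [hD0 i j]
  have inner_col : ∀ j, ∑ i ∈ Finset.range M,
      (if i ≤ k then (1:ℝ) else 0) * D i j ≤ 1 := by
    intro j
    refine le_trans (Finset.sum_le_sum fun i _ => ?_) (hcol j)
    split <;> simp [hD0 i j]
  have hQrow : ∑ i ∈ Finset.range M, ∑ j ∈ Finset.range M,
      (if i ≤ k then (1:ℝ) else 0) * (if j ≤ l then (1:ℝ) else 0) * D i j ≤ ((k + 1 : ℕ) : ℝ) := by
    have h1 : ∀ i ∈ Finset.range M, ∑ j ∈ Finset.range M,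
        (if i ≤ k then (1:ℝ) else 0) * (if j ≤ l then (1:ℝ) else 0) * D i j
          ≤ (if i ≤ k then (1:ℝ) else 0) := by
      intro i _
      calc ∑ j ∈ Finset.range M, (if i ≤ k then (1:ℝ) else 0) * (if j ≤ l then (1:ℝ) else 0) * D i j
          = (if i ≤ k then (1:ℝ) else 0) * ∑ j ∈ Finset.range M, (if j ≤ l then (1:ℝ) else 0) * D i j := by
            rw [Finset.mul_sum]
            exact Finset.sum_congr rfl fun j _ => by ring
        _ ≤ (if i ≤ k then (1:ℝ) else 0) * 1 := by
            refine mul_le_mul_of_nonneg_left (inner_row i) ?_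
            split <;> norm_num
        _ = (if i ≤ k then (1:ℝ) else 0) := mul_one _
    calc ∑ i ∈ Finset.range M, ∑ j ∈ Finset.range M,
        (if i ≤ k then (1:ℝ) else 0) * (if j ≤ l then (1:ℝ) else 0) * D i j
        ≤ ∑ i ∈ Finset.range M, (if i ≤ k then (1:ℝ) else 0) := Finset.sum_le_sum h1
      _ = ((k + 1 : ℕ) : ℝ) := indcard k hkM
  have hQcol : ∑ i ∈ Finset.range M, ∑ j ∈ Finset.range M,
      (if i ≤ k then (1:ℝ) else 0) * (if j ≤ l then (1:ℝ) else 0) * D i j ≤ ((l + 1 : ℕ) : ℝ) := by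
    rw [Finset.sum_comm]
    have h1 : ∀ j ∈ Finset.range M, ∑ i ∈ Finset.range M,
        (if i ≤ k then (1:ℝ) else 0) * (if j ≤ l then (1:ℝ) else 0) * D i j
          ≤ (if j ≤ l then (1:ℝ) else 0) := by
      intro j _
      calc ∑ i ∈ Finset.range M, (if i ≤ k then (1:ℝ) else 0) * (if j ≤ l then (1:ℝ) else 0) * D i j
          = (if j ≤ l then (1:ℝ) else 0) * ∑ i ∈ Finset.range M, (if i ≤ k then (1:ℝ) else 0) * D i j := by
            rw [Finset.mul_sum]
            exact Finset.sum_congr rfl fun i _ => by ring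
        _ ≤ (if j ≤ l then (1:ℝ) else 0) * 1 := by
            refine mul_le_mul_of_nonneg_left (inner_col j) ?_
            split <;> norm_num
        _ = (if j ≤ l then (1:ℝ) else 0) := mul_one _
    calc ∑ j ∈ Finset.range M, ∑ i ∈ Finset.range M,
        (if i ≤ k then (1:ℝ) else 0) * (if j ≤ l then (1:ℝ) else 0) * D i j
        ≤ ∑ j ∈ Finset.range M, (if j ≤ l then (1:ℝ) else 0) := Finset.sum_le_sum h1
      _ = ((l + 1 : ℕ) : ℝ) := indcard l hlM
  rw [hN]
  have hmin : ((min k l + 1 : ℕ) : ℝ) = min ((k + 1 : ℕ) : ℝ) ((l + 1 : ℕ) : ℝ) := by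
    rw [← Nat.cast_min]
    congr 1
    omega
  rw [hmin]
  exact le_min hQrow hQcol

lemma row_norm_one {k : ℕ} {A : Matrix (Fin k) (Fin k) Quat} (h : A * Aᴴ = 1) (i : Fin k) :
    ∑ j, ‖A i j‖ ^ 2 = 1 := by
  have h1 : (A * Aᴴ) i i = 1 := by rw [h]; exact Matrix.one_apply_eq i
  have h2 : (∑ j, A i j * star (A i j)).re = (1 : Quat).re := by
    rw [← h1]; simp [Matrix.mul_apply, Matrix.conjTranspose_apply]
  rw [quat_re_sum] at h2
  simpa only [quat_mul_star_re, Quaternion.re_one] using h2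

lemma col_norm_one {k : ℕ} {A : Matrix (Fin k) (Fin k) Quat} (h : Aᴴ * A = 1) (j : Fin k) :
    ∑ i, ‖A i j‖ ^ 2 = 1 := by
  have h1 : (Aᴴ * A) j j = 1 := by rw [h]; exact Matrix.one_apply_eq j
  have h2 : (∑ i, star (A i j) * A i j).re = (1 : Quat).re := by
    rw [← h1]; simp [Matrix.mul_apply, Matrix.conjTranspose_apply]
  rw [quat_re_sum] at h2
  simpa only [quat_star_mul_re, Quaternion.re_one] using h2


theorem quaternion_von_neumann_trace (m n : ℕ)
    (X Y : Matrix (Fin m) (Fin n) Quat)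
    (P U : Matrix (Fin m) (Fin m) Quat) (Q V : Matrix (Fin n) (Fin n) Quat)
    (s t : Fin (min m n) → ℝ)
    (hP : IsQUnitary P) (hU : IsQUnitary U) (hQ : IsQUnitary Q) (hV : IsQUnitary V)
    (hs : Antitone s) (hsnn : ∀ i, 0 ≤ s i)
    (ht : Antitone t) (htnn : ∀ i, 0 ≤ t i)
    (hX : X = P * Dmat s * Qᴴ) (hY : Y = U * Dmat t * Vᴴ) :
    (Matrix.trace (Xᴴ * Y)).re ≤ ∑ i, s i * t i := by
  subst hX hY
  have hA1 : (Pᴴ * U)ᴴ * (Pᴴ * U) = 1 := by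
    rw [Matrix.conjTranspose_mul, Matrix.conjTranspose_conjTranspose]
    have h : Uᴴ * P * (Pᴴ * U) = Uᴴ * ((P * Pᴴ) * U) := by
      rw [Matrix.mul_assoc, ← Matrix.mul_assoc P]
    rw [h, hP.2, Matrix.one_mul, hU.1]
  have hA2 : (Pᴴ * U) * (Pᴴ * U)ᴴ = 1 := by
    rw [Matrix.conjTranspose_mul, Matrix.conjTranspose_conjTranspose]
    have h : Pᴴ * U * (Uᴴ * P) = Pᴴ * ((U * Uᴴ) * P) := by
      rw [Matrix.mul_assoc, ← Matrix.mul_assoc U]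
    rw [h, hU.2, Matrix.one_mul, hP.1]
  have hB1 : (Vᴴ * Q)ᴴ * (Vᴴ * Q) = 1 := by
    rw [Matrix.conjTranspose_mul, Matrix.conjTranspose_conjTranspose]
    have h : Qᴴ * V * (Vᴴ * Q) = Qᴴ * ((V * Vᴴ) * Q) := by
      rw [Matrix.mul_assoc, ← Matrix.mul_assoc V]
    rw [h, hV.2, Matrix.one_mul, hQ.1]
  have hB2 : (Vᴴ * Q) * (Vᴴ * Q)ᴴ = 1 := by
    rw [Matrix.conjTranspose_mul, Matrix.conjTranspose_conjTranspose]
    have h : Vᴴ * Q * (Qᴴ * V) = Vᴴ * ((Q * Qᴴ) * V) := by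
      rw [Matrix.mul_assoc, ← Matrix.mul_assoc Q]
    rw [h, hQ.2, Matrix.one_mul, hV.1]
  have key1 : (Matrix.trace ((P * Dmat s * Qᴴ)ᴴ * (U * Dmat t * Vᴴ))).re
      = ∑ k : Fin (min m n), ∑ l : Fin (min m n),
          s k * t l * ((Pᴴ * U) (Fin.castLE (Nat.min_le_left m n) k)
              (Fin.castLE (Nat.min_le_left m n) l) *
            (Vᴴ * Q) (Fin.castLE (Nat.min_le_right m n) l)
              (Fin.castLE (Nat.min_le_right m n) k)).re := by
    have hXH : (P * Dmat s * Qᴴ)ᴴ * (U * Dmat t * Vᴴ)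
        = Q * ((Dmat s)ᴴ * (Pᴴ * (U * (Dmat t * Vᴴ)))) := by
      rw [Matrix.conjTranspose_mul, Matrix.conjTranspose_mul,
        Matrix.conjTranspose_conjTranspose]
      simp only [Matrix.mul_assoc]
    rw [hXH, retrace_comm]
    have hassoc : (Dmat s)ᴴ * (Pᴴ * (U * (Dmat t * Vᴴ))) * Q
        = (Dmat s)ᴴ * ((Pᴴ * U) * Dmat t * (Vᴴ * Q)) := by
      simp only [Matrix.mul_assoc]
    rw [hassoc, trace_DH_mul, quat_re_sum]
    refine Finset.sum_congr rfl fun k _ => ?_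
    rw [entry_expand, Finset.mul_sum, quat_re_sum]
    refine Finset.sum_congr rfl fun l _ => ?_
    rw [← mul_assoc, ← Quaternion.coe_mul, quat_coe_mul_re]
  rw [key1]
  set Sn : ℕ → ℝ := fun i => if h : i < min m n then s ⟨i, h⟩ else 0 with hSndef
  set Tn : ℕ → ℝ := fun i => if h : i < min m n then t ⟨i, h⟩ else 0 with hTndef
  set Dn : ℕ → ℕ → ℝ := fun i j =>
    if h : i < min m n ∧ j < min m n then
      (‖(Pᴴ * U) (Fin.castLE (Nat.min_le_left m n) ⟨i, h.1⟩)
          (Fin.castLE (Nat.min_le_left m n) ⟨j, h.2⟩)‖ ^ 2 +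
        ‖(Vᴴ * Q) (Fin.castLE (Nat.min_le_right m n) ⟨j, h.2⟩)
          (Fin.castLE (Nat.min_le_right m n) ⟨i, h.1⟩)‖ ^ 2) / 2
    else 0 with hDndef
  have hSn : ∀ k : Fin (min m n), Sn (k : ℕ) = s k := fun k => by
    simp only [hSndef]; rw [dif_pos k.isLt]
  have hTn : ∀ k : Fin (min m n), Tn (k : ℕ) = t k := fun k => by
    simp only [hTndef]; rw [dif_pos k.isLt]
  have hDn : ∀ k l : Fin (min m n), Dn (k : ℕ) (l : ℕ)
      = (‖(Pᴴ * U) (Fin.castLE (Nat.min_le_left m n) k)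
            (Fin.castLE (Nat.min_le_left m n) l)‖ ^ 2 +
          ‖(Vᴴ * Q) (Fin.castLE (Nat.min_le_right m n) l)
            (Fin.castLE (Nat.min_le_right m n) k)‖ ^ 2) / 2 := fun k l => by
    simp only [hDndef]; rw [dif_pos ⟨k.isLt, l.isLt⟩]
  calc ∑ k : Fin (min m n), ∑ l : Fin (min m n),
        s k * t l * ((Pᴴ * U) (Fin.castLE (Nat.min_le_left m n) k)
            (Fin.castLE (Nat.min_le_left m n) l) *
          (Vᴴ * Q) (Fin.castLE (Nat.min_le_right m n) l)
            (Fin.castLE (Nat.min_le_right m n) k)).re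
      ≤ ∑ k : Fin (min m n), ∑ l : Fin (min m n),
          s k * t l * ((‖(Pᴴ * U) (Fin.castLE (Nat.min_le_left m n) k)
              (Fin.castLE (Nat.min_le_left m n) l)‖ ^ 2 +
            ‖(Vᴴ * Q) (Fin.castLE (Nat.min_le_right m n) l)
              (Fin.castLE (Nat.min_le_right m n) k)‖ ^ 2) / 2) := by
        refine Finset.sum_le_sum fun k _ => Finset.sum_le_sum fun l _ => ?_
        refine mul_le_mul_of_nonneg_left ?_ (mul_nonneg (hsnn k) (htnn l))
        refine le_trans (quat_re_mul_le _ _) ?_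
        nlinarith [sq_nonneg (‖(Pᴴ * U) (Fin.castLE (Nat.min_le_left m n) k)
              (Fin.castLE (Nat.min_le_left m n) l)‖ -
            ‖(Vᴴ * Q) (Fin.castLE (Nat.min_le_right m n) l)
              (Fin.castLE (Nat.min_le_right m n) k)‖)]
    _ = ∑ i ∈ Finset.range (min m n), ∑ j ∈ Finset.range (min m n),
          Sn i * Tn j * Dn i j := by
        rw [← Fin.sum_univ_eq_sum_range
          (fun i => ∑ j ∈ Finset.range (min m n), Sn i * Tn j * Dn i j) (min m n)]
        refine Finset.sum_congr rfl fun k _ => ?_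
        rw [← Fin.sum_univ_eq_sum_range (fun j => Sn (k : ℕ) * Tn j * Dn (k : ℕ) j) (min m n)]
        refine Finset.sum_congr rfl fun l _ => ?_
        rw [hSn, hTn, hDn]
    _ ≤ ∑ i ∈ Finset.range (min m n), Sn i * Tn i := by
        refine key_ineq (min m n) Sn Tn Dn ?_ ?_ ?_ ?_ ?_ ?_ ?_
        · intro k
          simp only [hSndef]
          by_cases hk1 : k + 1 < min m n
          · rw [dif_pos hk1, dif_pos (show k < min m n by omega)]
            exact hs (Fin.mk_le_mk.2 (Nat.le_succ k))
          · rw [dif_neg hk1]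
            by_cases hk : k < min m n
            · rw [dif_pos hk]; exact hsnn _
            · rw [dif_neg hk]
        · intro k hk; simp only [hSndef]; exact dif_neg (by omega)
        · intro k
          simp only [hTndef]
          by_cases hk1 : k + 1 < min m n
          · rw [dif_pos hk1, dif_pos (show k < min m n by omega)]
            exact ht (Fin.mk_le_mk.2 (Nat.le_succ k))
          · rw [dif_neg hk1]
            by_cases hk : k < min m n
            · rw [dif_pos hk]; exact htnn _
            · rw [dif_neg hk]
        · intro k hk; simp only [hTndef]; exact dif_neg (by omega)
        · intro i j
          simp only [hDndef]
          split
          · positivity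
          · exact le_refl 0
        · intro i
          by_cases hi : i < min m n
          · rw [← Fin.sum_univ_eq_sum_range (fun j => Dn i j) (min m n)]
            have heq : ∀ l : Fin (min m n), Dn i (l : ℕ)
                = (‖(Pᴴ * U) (Fin.castLE (Nat.min_le_left m n) ⟨i, hi⟩)
                      (Fin.castLE (Nat.min_le_left m n) l)‖ ^ 2 +
                    ‖(Vᴴ * Q) (Fin.castLE (Nat.min_le_right m n) l)
                      (Fin.castLE (Nat.min_le_right m n) ⟨i, hi⟩)‖ ^ 2) / 2 := fun l => by
              simp only [hDndef]; rw [dif_pos ⟨hi, l.isLt⟩]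
            rw [Finset.sum_congr rfl fun l _ => heq l]
            rw [← Finset.sum_div, Finset.sum_add_distrib]
            have e1 : ∑ l : Fin (min m n),
                ‖(Pᴴ * U) (Fin.castLE (Nat.min_le_left m n) ⟨i, hi⟩)
                  (Fin.castLE (Nat.min_le_left m n) l)‖ ^ 2 ≤ 1 := by
              refine le_trans (sum_castLE_le (Nat.min_le_left m n)
                (fun j => ‖(Pᴴ * U) (Fin.castLE (Nat.min_le_left m n) ⟨i, hi⟩) j‖ ^ 2)
                (fun j => sq_nonneg _)) ?_
              rw [row_norm_one hA2]
            have e2 : ∑ l : Fin (min m n),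
                ‖(Vᴴ * Q) (Fin.castLE (Nat.min_le_right m n) l)
                  (Fin.castLE (Nat.min_le_right m n) ⟨i, hi⟩)‖ ^ 2 ≤ 1 := by
              refine le_trans (sum_castLE_le (Nat.min_le_right m n)
                (fun j => ‖(Vᴴ * Q) j (Fin.castLE (Nat.min_le_right m n) ⟨i, hi⟩)‖ ^ 2)
                (fun j => sq_nonneg _)) ?_
              rw [col_norm_one hB1]
            linarith
          · rw [Finset.sum_eq_zero fun j _ => ?_]
            · norm_num
            · simp only [hDndef]; exact dif_neg (by omega)
        · intro j
          by_cases hj : j < min m n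
          · rw [← Fin.sum_univ_eq_sum_range (fun i => Dn i j) (min m n)]
            have heq : ∀ k : Fin (min m n), Dn (k : ℕ) j
                = (‖(Pᴴ * U) (Fin.castLE (Nat.min_le_left m n) k)
                      (Fin.castLE (Nat.min_le_left m n) ⟨j, hj⟩)‖ ^ 2 +
                    ‖(Vᴴ * Q) (Fin.castLE (Nat.min_le_right m n) ⟨j, hj⟩)
                      (Fin.castLE (Nat.min_le_right m n) k)‖ ^ 2) / 2 := fun k => by
              simp only [hDndef]; rw [dif_pos ⟨k.isLt, hj⟩]
            rw [Finset.sum_congr rfl fun k _ => heq k]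
            rw [← Finset.sum_div, Finset.sum_add_distrib]
            have e1 : ∑ k : Fin (min m n),
                ‖(Pᴴ * U) (Fin.castLE (Nat.min_le_left m n) k)
                  (Fin.castLE (Nat.min_le_left m n) ⟨j, hj⟩)‖ ^ 2 ≤ 1 := by
              refine le_trans (sum_castLE_le (Nat.min_le_left m n)
                (fun i => ‖(Pᴴ * U) i (Fin.castLE (Nat.min_le_left m n) ⟨j, hj⟩)‖ ^ 2)
                (fun i => sq_nonneg _)) ?_
              rw [col_norm_one hA1]
            have e2 : ∑ k : Fin (min m n),
                ‖(Vᴴ * Q) (Fin.castLE (Nat.min_le_right m n) ⟨j, hj⟩)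
                  (Fin.castLE (Nat.min_le_right m n) k)‖ ^ 2 ≤ 1 := by
              refine le_trans (sum_castLE_le (Nat.min_le_right m n)
                (fun i => ‖(Vᴴ * Q) (Fin.castLE (Nat.min_le_right m n) ⟨j, hj⟩) i‖ ^ 2)
                (fun i => sq_nonneg _)) ?_
              rw [row_norm_one hB2]
            linarith
          · rw [Finset.sum_eq_zero fun i _ => ?_]
            · norm_num
            · simp only [hDndef]; exact dif_neg (by omega)
    _ = ∑ i : Fin (min m n), s i * t i := by
        rw [← Fin.sum_univ_eq_sum_range (fun i => Sn i * Tn i) (min m n)]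
        exact Finset.sum_congr rfl fun i _ => by rw [hSn, hTn]
end
end

section
/- Pointwise and ℓ2 bounds for the QNMF singular value shrinkage: let λ > 0, α > 0 and let σ ∈ ℝ^M satisfy σ₁ ≥ … ≥ σ_M ≥ 0, and let σ̃ = S_{λ,α}(σ) be the QNMF shrinkage of σ. Then for every index i one has 0 ≤ σ̃_i ≤ σ_i and σ_i − σ̃_i ≤ λ; consequently ∑_{i=1}^{M} (σ_i − σ̃_i)² ≤ M·λ². -/
open Matrix BigOperators Filter

noncomputable section

theorem qnmf_shrinkage_bounds (M : ℕ) (lam alph : ℝ)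
    (hlam : 0 < lam) (halph : 0 < alph)
    (σ : Fin M → ℝ) (hmono : Antitone σ) (hnn : ∀ i, 0 ≤ σ i) :
    (∀ i, 0 ≤ Sshrink lam alph σ i ∧ Sshrink lam alph σ i ≤ σ i ∧
      σ i - Sshrink lam alph σ i ≤ lam) ∧
    ∑ i, (σ i - Sshrink lam alph σ i) ^ 2 ≤ M * lam ^ 2 := by
  have key : ∀ i, 0 ≤ Sshrink lam alph σ i ∧ Sshrink lam alph σ i ≤ σ i ∧
      σ i - Sshrink lam alph σ i ≤ lam := by
    intro i
    simp only [Sshrink]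
    set z : Fin M → ℝ := fun i => if lam < σ i then σ i - lam / 2 else 0 with hzdef
    set nz : ℝ := Real.sqrt (∑ i, z i ^ 2) with hnzdef
    by_cases h0 : nz = 0
    · have hsumnn : (0:ℝ) ≤ ∑ j, z j ^ 2 := Finset.sum_nonneg fun j _ => sq_nonneg _
      have hsum : ∑ j, z j ^ 2 = 0 := by
        rwa [hnzdef, Real.sqrt_eq_zero hsumnn] at h0
      have hzi : z i = 0 := by
        have := (Finset.sum_eq_zero_iff_of_nonneg
          (fun j _ => sq_nonneg (z j))).mp hsum i (Finset.mem_univ i)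
        exact pow_eq_zero_iff (n := 2) (by norm_num) |>.mp this
      have hσle : σ i ≤ lam := by
        by_contra hc
        push_neg at hc
        simp only [hzdef, if_pos hc] at hzi
        linarith
      simp only [if_pos h0]
      refine ⟨le_refl 0, hnn i, by linarith⟩
    · have hnzpos : 0 < nz := lt_of_le_of_ne (Real.sqrt_nonneg _) (Ne.symm h0)
      set K : ℝ := 1 + alph * lam / (2 * nz) with hKdef
      have hK1 : 1 < K := by
        rw [hKdef]
        have : 0 < alph * lam / (2 * nz) := by positivity
        linarith
      clear_value K
      simp only [if_neg h0]
      by_cases hT : K * lam / (2 * (K - 1)) < σ i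
      · simp only [if_pos hT]
        exact ⟨hnn i, le_refl _, by linarith⟩
      · simp only [if_neg hT]
        by_cases hl : lam < σ i
        · simp only [if_pos hl]
          push_neg at hT
          have hK1' : 0 < 2 * (K - 1) := by linarith
          have hT' : σ i * (2 * (K - 1)) ≤ K * lam := by
            rwa [le_div_iff₀ hK1'] at hT
          refine ⟨by nlinarith, by nlinarith, by nlinarith⟩
        · simp only [if_neg hl]
          push_neg at hl
          exact ⟨le_refl 0, hnn i, by linarith⟩
  refine ⟨key, ?_⟩
  have hle : ∀ i ∈ Finset.univ, (σ i - Sshrink lam alph σ i) ^ 2 ≤ lam ^ 2 := by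
    intro i _
    obtain ⟨h1, h2, h3⟩ := key i
    have : 0 ≤ σ i - Sshrink lam alph σ i := by linarith
    nlinarith
  calc ∑ i, (σ i - Sshrink lam alph σ i) ^ 2 ≤ ∑ _i : Fin M, lam ^ 2 :=
        Finset.sum_le_sum hle
    _ = M * lam ^ 2 := by
        rw [Finset.sum_const, Finset.card_univ, Fintype.card_fin, nsmul_eq_mul]
end
end

section
/- Convergence of the QNMF ADMM iteration for the linear inverse problem (Theorem 3.2): let A be an m×m quaternion matrix, Y an m×n quaternion matrix, γ > 0, λ > 0, α > 0, β⁰ > 0, μ > 1, and set β^{(k)} = μ^k·β⁰. Suppose (X^{(k)}), (Z^{(k)}), (η^{(k)}) are sequences of m×n quaternion matrices such that for every k: (i) (γ·Aᴴ*A + β^{(k)}·I) * X^{(k+1)} = γ·Aᴴ*Y + β^{(k)}·Z^{(k)} − η^{(k)}; (ii) there exist unitary quaternion matrices U^{(k)}, V^{(k)} and σ^{(k)} ∈ ℝ^M (M = min(m,n)) with σ^{(k)}₁ ≥ … ≥ σ^{(k)}_M ≥ 0 such that X^{(k+1)} + η^{(k)}/β^{(k)} = U^{(k)} * D(σ^{(k)})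 * (V^{(k)})ᴴ and Z^{(k+1)} = U^{(k)} * D(S_{λ/β^{(k)},α}(σ^{(k)})) * (V^{(k)})ᴴ; (iii) η^{(k+1)} = η^{(k)} + β^{(k)}·(X^{(k+1)} − Z^{(k+1)}). Then ‖X^{(k+1)} − Z^{(k+1)}‖_F → 0, ‖X^{(k+1)} − X^{(k)}‖_F → 0, and ‖Z^{(k+1)} − Z^{(k)}‖_F → 0 as k → ∞. -/
open Matrix BigOperators Filter

noncomputable section

lemma re_star_mul_self (q : Quat) : (star q * q).re = ‖q‖^2 := by
  rw [Quaternion.star_mul_self, Quaternion.re_coe, Quaternion.normSq_eq_norm_mul_self, sq]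

lemma re_mul_comm (p q : Quat) : (p * q).re = (q * p).re := by
  simp [Quaternion.re_mul]; ring

lemma re_le_norm (q : Quat) : q.re ≤ ‖q‖ := by
  have h : q.re ^ 2 ≤ ‖q‖ ^ 2 := by
    rw [← re_star_mul_self]
    have := Quaternion.normSq_def' q
    rw [Quaternion.star_mul_self, Quaternion.re_coe]
    nlinarith [sq_nonneg q.imI, sq_nonneg q.imJ, sq_nonneg q.imK]
  nlinarith [norm_nonneg q, abs_le_abs (le_abs_self q.re)]

variable {m n p : ℕ}

lemma re_sum {ι : Type*} (s : Finset ι) (f : ι → Quat) :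
    (∑ i ∈ s, f i).re = ∑ i ∈ s, (f i).re :=
  map_sum (QuaternionAlgebra.reₗ (-1 : ℝ) (0 : ℝ) (-1 : ℝ) : Quat →ₗ[ℝ] ℝ) f s

lemma qinner_eq_trace (P Q : Matrix (Fin m) (Fin n) Quat) :
    qinner P Q = ∑ j, ((Pᴴ * Q) j j).re := by
  unfold qinner
  rw [Finset.sum_comm]
  congr 1; ext j
  rw [Matrix.mul_apply, re_sum]
  simp [Matrix.conjTranspose_apply]

lemma qinner_self (A : Matrix (Fin m) (Fin n) Quat) :
    qinner A A = ∑ i, ∑ j, ‖A i j‖ ^ 2 := by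
  unfold qinner; simp only [re_star_mul_self]

lemma qinner_self_nonneg (A : Matrix (Fin m) (Fin n) Quat) : 0 ≤ qinner A A := by
  rw [qinner_self]; positivity

lemma frob_eq (A : Matrix (Fin m) (Fin n) Quat) : frob A = Real.sqrt (qinner A A) := by
  rw [frob, qinner_self]

lemma frob_nonneg (A : Matrix (Fin m) (Fin n) Quat) : 0 ≤ frob A := Real.sqrt_nonneg _

lemma sq_frob (A : Matrix (Fin m) (Fin n) Quat) : frob A ^ 2 = qinner A A := by
  rw [frob_eq, Real.sq_sqrt (qinner_self_nonneg A)]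

lemma qinner_eq_trace' (P Q : Matrix (Fin m) (Fin n) Quat) :
    qinner P Q = ∑ i, ((Q * Pᴴ) i i).re := by
  unfold qinner
  congr 1; ext i
  rw [Matrix.mul_apply, re_sum]
  congr 1; ext j
  rw [Matrix.conjTranspose_apply, re_mul_comm]

lemma qinner_comm (P Q : Matrix (Fin m) (Fin n) Quat) : qinner P Q = qinner Q P := by
  unfold qinner
  congr 1; ext i; congr 1; ext j
  calc (star (P i j) * Q i j).re = (Q i j * star (P i j)).re := re_mul_comm _ _
    _ = (star (Q i j * star (P i j))).re := (Quaternion.re_star _).symm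
    _ = (P i j * star (Q i j)).re := by rw [StarMul.star_mul, star_star]
    _ = (star (Q i j) * P i j).re := re_mul_comm _ _

lemma qinner_mul_left (M : Matrix (Fin m) (Fin m) Quat) (P Q : Matrix (Fin m) (Fin n) Quat) :
    qinner (M * P) Q = qinner P (Mᴴ * Q) := by
  rw [qinner_eq_trace, qinner_eq_trace, Matrix.conjTranspose_mul, Matrix.mul_assoc]

lemma qinner_add_right (P Q R : Matrix (Fin m) (Fin n) Quat) :
    qinner P (Q + R) = qinner P Q + qinner P R := by
  unfold qinner
  rw [← Finset.sum_add_distrib]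
  congr 1; ext i
  rw [← Finset.sum_add_distrib]
  congr 1; ext j
  simp [Matrix.add_apply, mul_add]

lemma qinner_smul_right (r : ℝ) (P Q : Matrix (Fin m) (Fin n) Quat) :
    qinner P (r • Q) = r * qinner P Q := by
  unfold qinner
  rw [Finset.mul_sum]
  congr 1; ext i
  rw [Finset.mul_sum]
  congr 1; ext j
  simp [Matrix.smul_apply]

lemma qinner_le (P Q : Matrix (Fin m) (Fin n) Quat) : qinner P Q ≤ frob P * frob Q := by
  have h1 : qinner P Q ≤ ∑ i, ∑ j, ‖P i j‖ * ‖Q i j‖ := by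
    apply Finset.sum_le_sum; intro i _
    apply Finset.sum_le_sum; intro j _
    calc (star (P i j) * Q i j).re ≤ ‖star (P i j) * Q i j‖ := re_le_norm _
      _ = ‖P i j‖ * ‖Q i j‖ := by rw [norm_mul, norm_star]
  have h2 : ∑ i, ∑ j, ‖P i j‖ * ‖Q i j‖ ≤ frob P * frob Q := by
    rw [frob, frob]
    have h := Real.sum_mul_le_sqrt_mul_sqrt Finset.univ
      (fun p : Fin m × Fin n => ‖P p.1 p.2‖) (fun p : Fin m × Fin n => ‖Q p.1 p.2‖)
    simpa [Fintype.sum_prod_type] using h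
  linarith

lemma qinner_add_left (P Q R : Matrix (Fin m) (Fin n) Quat) :
    qinner (P + Q) R = qinner P R + qinner Q R := by
  rw [qinner_comm, qinner_add_right, qinner_comm R P, qinner_comm R Q]

lemma qinner_smul_left (r : ℝ) (P Q : Matrix (Fin m) (Fin n) Quat) :
    qinner (r • P) Q = r * qinner P Q := by
  rw [qinner_comm, qinner_smul_right, qinner_comm Q P]

lemma frob_smul (r : ℝ) (A : Matrix (Fin m) (Fin n) Quat) : frob (r • A) = |r| * frob A := by
  rw [frob_eq, frob_eq, qinner_smul_left, qinner_smul_right, ← mul_assoc, ← sq,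
    Real.sqrt_mul (sq_nonneg r), Real.sqrt_sq_eq_abs]

lemma frob_add_le (A B : Matrix (Fin m) (Fin n) Quat) : frob (A + B) ≤ frob A + frob B := by
  have h : qinner (A + B) (A + B) ≤ (frob A + frob B) ^ 2 := by
    rw [qinner_add_left, qinner_add_right, qinner_add_right]
    have h1 := qinner_le A B
    have h2 : qinner B A = qinner A B := qinner_comm B A
    have h3 := sq_frob A
    have h4 := sq_frob B
    nlinarith [frob_nonneg A, frob_nonneg B]
  rw [frob_eq]
  calc Real.sqrt (qinner (A + B) (A + B)) ≤ Real.sqrt ((frob A + frob B) ^ 2) :=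
        Real.sqrt_le_sqrt h
    _ = frob A + frob B := by
        rw [Real.sqrt_sq (add_nonneg (frob_nonneg A) (frob_nonneg B))]

lemma frob_neg (A : Matrix (Fin m) (Fin n) Quat) : frob (-A) = frob A := by
  have : (-A) = (-1 : ℝ) • A := by simp
  rw [this, frob_smul]; simp

lemma frob_sub_le (A B : Matrix (Fin m) (Fin n) Quat) : frob (A - B) ≤ frob A + frob B := by
  rw [sub_eq_add_neg]
  calc frob (A + -B) ≤ frob A + frob (-B) := frob_add_le _ _
    _ = frob A + frob B := by rw [frob_neg]

lemma frob_mul_le (P : Matrix (Fin m) (Fin n) Quat) (Q : Matrix (Fin n) (Fin p) Quat) :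
    frob (P * Q) ≤ frob P * frob Q := by
  rw [frob, frob, frob, ← Real.sqrt_mul (Finset.sum_nonneg fun i _ =>
    Finset.sum_nonneg fun j _ => sq_nonneg ‖P i j‖)]
  apply Real.sqrt_le_sqrt
  have key : ∀ (i : Fin m) (k : Fin p),
      ‖(P * Q) i k‖ ^ 2 ≤ (∑ j, ‖P i j‖ ^ 2) * (∑ j, ‖Q j k‖ ^ 2) := by
    intro i k
    have h1 : ‖(P * Q) i k‖ ≤ ∑ j, ‖P i j‖ * ‖Q j k‖ := by
      rw [Matrix.mul_apply]
      calc ‖∑ j, P i j * Q j k‖ ≤ ∑ j, ‖P i j * Q j k‖ := norm_sum_le _ _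
        _ = ∑ j, ‖P i j‖ * ‖Q j k‖ := by simp [norm_mul]
    have h2 : (∑ j, ‖P i j‖ * ‖Q j k‖) ^ 2 ≤ (∑ j, ‖P i j‖ ^ 2) * (∑ j, ‖Q j k‖ ^ 2) :=
      Finset.sum_mul_sq_le_sq_mul_sq _ _ _
    have h0 : (0:ℝ) ≤ ∑ j, ‖P i j‖ * ‖Q j k‖ := by positivity
    nlinarith [norm_nonneg ((P * Q) i k)]
  calc ∑ i, ∑ k, ‖(P * Q) i k‖ ^ 2
      ≤ ∑ i, ∑ k, (∑ j, ‖P i j‖ ^ 2) * (∑ j, ‖Q j k‖ ^ 2) := by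
        apply Finset.sum_le_sum; intro i _
        exact Finset.sum_le_sum fun k _ => key i k
    _ = (∑ i, ∑ j, ‖P i j‖ ^ 2) * (∑ j, ∑ k, ‖Q j k‖ ^ 2) := by
        rw [Finset.sum_mul]
        congr 1; ext i
        rw [← Finset.mul_sum]
        congr 1
        exact Finset.sum_comm

lemma frob_eq_of_qinner {A B : Matrix (Fin m) (Fin n) Quat}
    (h : qinner A A = qinner B B) : frob A = frob B := by
  rw [frob_eq, frob_eq, h]

lemma frob_unitary_left {U : Matrix (Fin m) (Fin m) Quat} (hU : IsQUnitary U)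
    (B : Matrix (Fin m) (Fin n) Quat) : frob (U * B) = frob B := by
  apply frob_eq_of_qinner
  rw [qinner_eq_trace, qinner_eq_trace, Matrix.conjTranspose_mul, Matrix.mul_assoc,
    ← Matrix.mul_assoc Uᴴ U B, hU.1, Matrix.one_mul]

lemma frob_unitary_right {V : Matrix (Fin n) (Fin n) Quat} (hV : IsQUnitary V)
    (B : Matrix (Fin m) (Fin n) Quat) : frob (B * Vᴴ) = frob B := by
  apply frob_eq_of_qinner
  rw [qinner_eq_trace', qinner_eq_trace', Matrix.conjTranspose_mul,
    Matrix.conjTranspose_conjTranspose, Matrix.mul_assoc,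
    ← Matrix.mul_assoc Vᴴ V Bᴴ, hV.1, Matrix.one_mul]

lemma frobSq_Dmat_sub (s t : Fin (min m n) → ℝ) :
    qinner (Dmat s - Dmat t) (Dmat s - Dmat t) = ∑ i : Fin (min m n), (s i - t i) ^ 2 := by
  rw [qinner_self]
  set G : ℕ → ℝ := fun i => if h : i < min m n then (s ⟨i, h⟩ - t ⟨i, h⟩) ^ 2 else 0 with hG
  have hrow : ∀ i : Fin m, ∑ j : Fin n, ‖(Dmat s - Dmat t) i j‖ ^ 2 = G (i : ℕ) := by
    intro i
    by_cases hin : (i : ℕ) < n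
    · have hmin : (i : ℕ) < min m n := lt_min i.isLt hin
      rw [Finset.sum_eq_single (⟨(i : ℕ), hin⟩ : Fin n)]
      · simp only [Matrix.sub_apply, Dmat, hG]
        rw [dif_pos trivial, dif_pos trivial, dif_pos hmin]
        rw [← Quaternion.coe_sub, Quaternion.norm_coe, Real.norm_eq_abs, sq_abs]
      · intro j _ hj
        have hij : (i : ℕ) ≠ (j : ℕ) := by
          intro h; apply hj; exact Fin.ext h.symm
        simp only [Matrix.sub_apply, Dmat]
        rw [dif_neg hij, dif_neg hij]
        simp
      · intro h; exact absurd (Finset.mem_univ _) h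
    · have : ∀ j : Fin n, ‖(Dmat s - Dmat t) i j‖ ^ 2 = 0 := by
        intro j
        have hij : (i : ℕ) ≠ (j : ℕ) := by
          intro h; exact hin (h ▸ j.isLt)
        simp only [Matrix.sub_apply, Dmat]
        rw [dif_neg hij, dif_neg hij]
        simp
      rw [Finset.sum_congr rfl fun j _ => this j, Finset.sum_const, smul_zero, hG]
      have h' : ¬ (i : ℕ) < min m n := fun hc => hin (lt_of_lt_of_le hc (min_le_right m n))
      show (0:ℝ) = if h : (i:ℕ) < min m n then (s ⟨(i:ℕ), h⟩ - t ⟨(i:ℕ), h⟩) ^ 2 else 0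
      rw [dif_neg h']
  calc ∑ i : Fin m, ∑ j : Fin n, ‖(Dmat s - Dmat t) i j‖ ^ 2
      = ∑ i : Fin m, G (i : ℕ) := Finset.sum_congr rfl fun i _ => hrow i
    _ = ∑ i ∈ Finset.range m, G i := (Finset.sum_range fun i => G i).symm ▸
          (Fin.sum_univ_eq_sum_range (fun i => G i) m)
    _ = ∑ i ∈ Finset.range (min m n), G i := by
        refine (Finset.sum_subset (Finset.range_subset_range.2 (min_le_left m n)) ?_).symm
        intro x _ hx
        rw [Finset.mem_range, not_lt] at hx
        rw [hG]; exact dif_neg (not_lt.2 hx)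
    _ = ∑ i : Fin (min m n), G (i : ℕ) := (Fin.sum_univ_eq_sum_range (fun i => G i) _).symm
    _ = ∑ i : Fin (min m n), (s i - t i) ^ 2 := by
        refine Finset.sum_congr rfl fun i _ => ?_
        exact dif_pos i.isLt

lemma frob_Dmat_sub_le {s t : Fin (min m n) → ℝ} {b : ℝ} (hb : 0 ≤ b)
    (h : ∀ i, |s i - t i| ≤ b) :
    frob (Dmat s - Dmat t) ≤ Real.sqrt (min m n) * b := by
  rw [frob_eq, frobSq_Dmat_sub]
  calc Real.sqrt (∑ i : Fin (min m n), (s i - t i) ^ 2)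
      ≤ Real.sqrt (∑ _i : Fin (min m n), b ^ 2) := by
        apply Real.sqrt_le_sqrt
        apply Finset.sum_le_sum
        intro i _
        rw [← sq_abs]
        exact pow_le_pow_left₀ (abs_nonneg _) (h i) 2
    _ = Real.sqrt ((min m n) * b ^ 2) := by
        rw [Finset.sum_const, Finset.card_univ, Fintype.card_fin, nsmul_eq_mul]
    _ = Real.sqrt (min m n) * b := by
        rw [Real.sqrt_mul (Nat.cast_nonneg _), Real.sqrt_sq hb]
        simp [Nat.cast_min]

lemma shrink_close {M : ℕ} {lam alph : ℝ} (hlam : 0 < lam) (halph : 0 < alph)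
    (σ : Fin M → ℝ) (hσ : ∀ i, 0 ≤ σ i) (i : Fin M) :
    |σ i - Sshrink lam alph σ i| ≤ lam := by
  have hdef : Sshrink lam alph σ i =
      (if Real.sqrt (∑ j, (if lam < σ j then σ j - lam / 2 else 0) ^ 2) = 0 then 0
       else
        (let K : ℝ := 1 + alph * lam /
            (2 * Real.sqrt (∑ j, (if lam < σ j then σ j - lam / 2 else 0) ^ 2));
         if K * lam / (2 * (K - 1)) < σ i then σ i
         else if lam < σ i then K * (σ i - lam / 2)
         else 0)) := by
    unfold Sshrink
    by_cases h : Real.sqrt (∑ j, (if lam < σ j then σ j - lam / 2 else 0) ^ 2) = 0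
    · rw [if_pos h, if_pos h]
    · rw [if_neg h, if_neg h]
  rw [hdef]
  set nz : ℝ := Real.sqrt (∑ j, (if lam < σ j then σ j - lam / 2 else 0) ^ 2) with hnz
  by_cases h0 : nz = 0
  · rw [if_pos h0]
    have hsum : ∑ j, (if lam < σ j then σ j - lam / 2 else 0) ^ 2 = 0 := by
      have hnonneg : (0:ℝ) ≤ ∑ j, (if lam < σ j then σ j - lam / 2 else 0) ^ 2 :=
        Finset.sum_nonneg fun j _ => sq_nonneg _
      have := Real.sqrt_eq_zero'.mp (hnz ▸ h0)
      linarith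
    have hzi : (if lam < σ i then σ i - lam / 2 else 0) = 0 := by
      have hle : (if lam < σ i then σ i - lam / 2 else 0) ^ 2 ≤ 0 := by
        have h := Finset.single_le_sum
          (f := fun j : Fin M => (if lam < σ j then σ j - lam / 2 else 0) ^ 2)
          (fun j _ => sq_nonneg _) (Finset.mem_univ i)
        rw [hsum] at h
        exact h
      nlinarith [sq_nonneg (if lam < σ i then σ i - lam / 2 else 0)]
    have hσi : σ i ≤ lam := by
      by_contra hc
      push_neg at hc
      rw [if_pos hc] at hzi
      linarith
    rw [sub_zero, abs_of_nonneg (hσ i)]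
    exact hσi
  · rw [if_neg h0]
    have hnz0 : 0 < nz := lt_of_le_of_ne (Real.sqrt_nonneg _) (Ne.symm h0)
    set K : ℝ := 1 + alph * lam / (2 * nz) with hK
    have hK1 : 1 < K := by
      rw [hK]
      have : 0 < alph * lam / (2 * nz) := by positivity
      linarith
    by_cases ha : K * lam / (2 * (K - 1)) < σ i
    · rw [if_pos ha]
      rw [sub_self, abs_zero]
      exact hlam.le
    · rw [if_neg ha]
      by_cases hb : lam < σ i
      · rw [if_pos hb]
        push_neg at ha
        have hKm1 : 0 < K - 1 := by linarith
        have h1 : σ i * (2 * (K - 1)) ≤ K * lam := (le_div_iff₀ (by positivity)).mp ha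
        have hmul : (K - 1) * lam ≤ (K - 1) * σ i :=
          mul_le_mul_of_nonneg_left hb.le hKm1.le
        have hKlam : 0 < K * lam := mul_pos (by linarith) hlam
        clear_value K nz
        have hd : σ i - K * (σ i - lam / 2) = K * lam / 2 - (K - 1) * σ i := by ring
        rw [hd, abs_of_nonneg (by linarith)]
        linarith
      · rw [if_neg hb]
        push_neg at hb
        rw [sub_zero, abs_of_nonneg (hσ i)]
        exact hb

theorem qnmf_admm_linear_inverse_convergence (m n : ℕ)
    (A : Matrix (Fin m) (Fin m) Quat) (Y : Matrix (Fin m) (Fin n) Quat)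
    (gam lam alph bet0 mu : ℝ)
    (hgam : 0 < gam) (hlam : 0 < lam) (halph : 0 < alph)
    (hbet0 : 0 < bet0) (hmu : 1 < mu)
    (bet : ℕ → ℝ) (hbet : ∀ k, bet k = mu ^ k * bet0)
    (X Z η : ℕ → Matrix (Fin m) (Fin n) Quat)
    (hX : ∀ k, (gam • (Aᴴ * A) + bet k • (1 : Matrix (Fin m) (Fin m) Quat)) * X (k + 1)
        = gam • (Aᴴ * Y) + bet k • Z k - η k)
    (hZ : ∀ k, ∃ (U : Matrix (Fin m) (Fin m) Quat) (V : Matrix (Fin n) (Fin n) Quat)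
        (σ : Fin (min m n) → ℝ),
        IsQUnitary U ∧ IsQUnitary V ∧ Antitone σ ∧ (∀ i, 0 ≤ σ i) ∧
        X (k + 1) + (bet k)⁻¹ • η k = U * Dmat σ * Vᴴ ∧
        Z (k + 1) = U * Dmat (Sshrink (lam / bet k) alph σ) * Vᴴ)
    (hη : ∀ k, η (k + 1) = η k + bet k • (X (k + 1) - Z (k + 1))) :
    Tendsto (fun k => frob (X (k + 1) - Z (k + 1))) atTop (nhds 0) ∧
    Tendsto (fun k => frob (X (k + 1) - X k)) atTop (nhds 0) ∧
    Tendsto (fun k => frob (Z (k + 1) - Z k)) atTop (nhds 0) := by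
  have hmupos : (0:ℝ) < mu := lt_trans one_pos hmu
  have hbetpos : ∀ k, 0 < bet k := fun k => by rw [hbet]; positivity
  have hbet00 : bet 0 = bet0 := by rw [hbet]; simp
  have hbetmono : ∀ k, bet0 ≤ bet k := fun k => by
    rw [hbet]
    have h1 : (1:ℝ) ≤ mu ^ k := one_le_pow₀ hmu.le
    nlinarith
  set Cs : ℝ := Real.sqrt (min m n) * lam with hCs
  have hCs0 : 0 ≤ Cs := mul_nonneg (Real.sqrt_nonneg _) hlam.le
  -- Step A : boundedness of η
  have hηb : ∀ k, frob (η (k+1)) ≤ Cs := by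
    intro k
    obtain ⟨U, V, σ, hU, hV, -, hσ0, hUSV, hZk⟩ := hZ k
    have hβ := hbetpos k
    have e1 : η (k+1) = bet k • ((X (k+1) + (bet k)⁻¹ • η k) - Z (k+1)) := by
      rw [hη k]
      simp only [smul_sub, smul_add, smul_inv_smul₀ (ne_of_gt hβ)]
      abel
    rw [e1, hUSV, hZk]
    have e2 : U * Dmat σ * Vᴴ - U * Dmat (Sshrink (lam / bet k) alph σ) * Vᴴ
        = U * (Dmat σ - Dmat (Sshrink (lam / bet k) alph σ)) * Vᴴ := by
      rw [Matrix.mul_sub, Matrix.sub_mul]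
    rw [e2, frob_smul, abs_of_pos hβ, frob_unitary_right hV, frob_unitary_left hU]
    have hb' : 0 < lam / bet k := div_pos hlam hβ
    have hD : frob (Dmat σ - Dmat (Sshrink (lam / bet k) alph σ))
        ≤ Real.sqrt (min m n) * (lam / bet k) :=
      frob_Dmat_sub_le hb'.le (fun i => shrink_close hb' halph σ hσ0 i)
    refine le_trans (mul_le_mul_of_nonneg_left hD hβ.le) (le_of_eq ?_)
    rw [hCs]
    field_simp
  have hηall : ∀ k, frob (η k) ≤ Cs + frob (η 0) := by
    intro k
    cases k with
    | zero => linarith [hCs0]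
    | succ k => linarith [hηb k, frob_nonneg (η 0)]
  set C1 : ℝ := 2 * Cs + frob (η 0) with hC1
  have hC10 : 0 ≤ C1 := by
    have := frob_nonneg (η 0); rw [hC1]; linarith
  -- Step B : X - Z small
  have hXZ : ∀ k, frob (X (k+1) - Z (k+1)) ≤ C1 / bet k := by
    intro k
    have hβ := hbetpos k
    have e : X (k+1) - Z (k+1) = (bet k)⁻¹ • (η (k+1) - η k) := by
      rw [hη k, add_sub_cancel_left, inv_smul_smul₀ (ne_of_gt hβ)]
    rw [e, frob_smul, abs_of_pos (inv_pos.2 hβ)]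
    have hbound : frob (η (k+1) - η k) ≤ C1 := by
      have := frob_sub_le (η (k+1)) (η k)
      have h1 := hηb k
      have h2 := hηall k
      rw [hC1]; linarith
    rw [div_eq_inv_mul]
    exact mul_le_mul_of_nonneg_left hbound (inv_pos.2 hβ).le
  -- Step C : tendsto of C / bet
  have hbtend : Tendsto bet atTop atTop := by
    have h := (tendsto_pow_atTop_atTop_of_one_lt hmu).atTop_mul_const hbet0
    exact h.congr (fun k => (hbet k).symm)
  have hT : ∀ C : ℝ, Tendsto (fun k => C / bet k) atTop (nhds 0) :=
    fun C => tendsto_const_nhds.div_atTop hbtend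
  have goal1 : Tendsto (fun k => frob (X (k + 1) - Z (k + 1))) atTop (nhds 0) :=
    squeeze_zero (fun k => frob_nonneg _) hXZ (hT C1)
  -- Step D : boundedness of Z and X
  set CY : ℝ := frob (Aᴴ * Y) with hCYdef
  set Ca : ℝ := frob (Aᴴ * A) with hCadef
  set C0 : ℝ := Cs + frob (η 0) with hC0def
  have hC00 : 0 ≤ C0 := by have := frob_nonneg (η 0); rw [hC0def]; linarith
  have hCY0 : 0 ≤ CY := frob_nonneg _
  have hCa0 : 0 ≤ Ca := frob_nonneg _
  have hceq : ∀ k, gam • ((Aᴴ * A) * X (k+1)) + bet k • X (k+1)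
      = gam • (Aᴴ * Y) + bet k • Z k - η k := by
    intro k
    have h := hX k
    rwa [Matrix.add_mul, Matrix.smul_mul, Matrix.smul_mul, Matrix.one_mul] at h
  have hXb : ∀ k, frob (X (k+1)) ≤ (gam * CY + C0) / bet k + frob (Z k) := by
    intro k
    have hβ := hbetpos k
    set x := X (k+1) with hxdef
    set c : Matrix (Fin m) (Fin n) Quat := gam • (Aᴴ * Y) + bet k • Z k - η k with hcdef
    have h1 : gam * qinner (A * x) (A * x) + bet k * qinner x x = qinner x c := by
      rw [hcdef, ← hceq k, qinner_add_right, qinner_smul_right, qinner_smul_right]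
      congr 2
      rw [qinner_mul_left, ← Matrix.mul_assoc]
    have h2 : bet k * frob x ^ 2 ≤ frob x * frob c := by
      have hAx := qinner_self_nonneg (A * x)
      have hCS := qinner_le x c
      have hg := mul_nonneg hgam.le hAx
      rw [sq_frob]
      linarith
    have h3 : frob x ≤ frob c / bet k := by
      rcases (frob_nonneg x).lt_or_eq with hpos | h0
      · rw [le_div_iff₀ hβ]
        nlinarith
      · rw [← h0]
        exact div_nonneg (frob_nonneg c) hβ.le
    have h4 : frob c ≤ gam * CY + bet k * frob (Z k) + frob (η k) := by
      calc frob c ≤ frob (gam • (Aᴴ * Y) + bet k • Z k) + frob (η k) := frob_sub_le _ _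
        _ ≤ frob (gam • (Aᴴ * Y)) + frob (bet k • Z k) + frob (η k) := by
            linarith [frob_add_le (gam • (Aᴴ * Y)) (bet k • Z k)]
        _ = gam * CY + bet k * frob (Z k) + frob (η k) := by
            rw [frob_smul, frob_smul, abs_of_pos hgam, abs_of_pos hβ, hCYdef]
    have h5 : (gam * CY + bet k * frob (Z k) + frob (η k)) / bet k
        = (gam * CY + frob (η k)) / bet k + frob (Z k) := by
      field_simp
      ring
    have h6 : (gam * CY + frob (η k)) / bet k ≤ (gam * CY + C0) / bet k := by
      rw [div_le_div_iff₀ hβ hβ]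
      have h := hηall k
      have : gam * CY + frob (η k) ≤ gam * CY + C0 := by rw [hC0def]; linarith
      exact mul_le_mul_of_nonneg_right this hβ.le
    calc frob x ≤ frob c / bet k := h3
      _ ≤ (gam * CY + bet k * frob (Z k) + frob (η k)) / bet k := by
          rw [div_le_div_iff₀ hβ hβ]
          exact mul_le_mul_of_nonneg_right h4 hβ.le
      _ = (gam * CY + frob (η k)) / bet k + frob (Z k) := h5
      _ ≤ (gam * CY + C0) / bet k + frob (Z k) := by linarith
  -- Z boundedness
  have hZb : ∀ k, frob (Z (k+1)) ≤ frob (X (k+1)) + C1 / bet k := by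
    intro k
    calc frob (Z (k+1)) = frob (X (k+1) - (X (k+1) - Z (k+1))) := by rw [sub_sub_cancel]
      _ ≤ frob (X (k+1)) + frob (X (k+1) - Z (k+1)) := frob_sub_le _ _
      _ ≤ frob (X (k+1)) + C1 / bet k := by linarith [hXZ k]
  set C2 : ℝ := gam * CY + C0 + C1 with hC2
  have hC20 : 0 ≤ C2 := by
    have := mul_nonneg hgam.le hCY0
    rw [hC2]; linarith
  have hZrec : ∀ k, frob (Z (k+1)) ≤ frob (Z k) + C2 / bet k := by
    intro k
    have h1 := hXb k
    have h2 := hZb k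
    have hdiv : (gam * CY + C0) / bet k + C1 / bet k = C2 / bet k := by
      rw [← add_div, hC2]
    linarith
  have hgeom : ∀ k, ∑ j ∈ Finset.range k, (bet j)⁻¹ ≤ bet0⁻¹ * (1 - mu⁻¹)⁻¹ := by
    intro k
    have hr0 : (0:ℝ) ≤ mu⁻¹ := by positivity
    have hr1 : mu⁻¹ < 1 := inv_lt_one_of_one_lt₀ hmu
    have heq : ∀ j, (bet j)⁻¹ = bet0⁻¹ * (mu⁻¹) ^ j := by
      intro j; rw [hbet, mul_inv, inv_pow]; ring
    rw [Finset.sum_congr rfl fun j _ => heq j, ← Finset.mul_sum]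
    apply mul_le_mul_of_nonneg_left _ (by positivity)
    have hne : mu⁻¹ ≠ 1 := by linarith
    rw [geom_sum_eq hne]
    have hk0 : (0:ℝ) ≤ (mu⁻¹) ^ k := by positivity
    have hk1 : (mu⁻¹) ^ k ≤ 1 := pow_le_one₀ hr0 hr1.le
    have hden : (0:ℝ) < 1 - mu⁻¹ := by linarith
    have he : ((mu⁻¹) ^ k - 1) / (mu⁻¹ - 1) = (1 - (mu⁻¹) ^ k) / (1 - mu⁻¹) := by
      rw [← neg_div_neg_eq]; ring_nf
    rw [he, div_le_iff₀ hden, inv_mul_cancel₀ (ne_of_gt hden)]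
    linarith
  set CZ : ℝ := frob (Z 0) + C2 * (bet0⁻¹ * (1 - mu⁻¹)⁻¹) with hCZ
  have hZbound : ∀ k, frob (Z k) ≤ CZ := by
    have key : ∀ k, frob (Z k) ≤ frob (Z 0) + C2 * ∑ j ∈ Finset.range k, (bet j)⁻¹ := by
      intro k
      induction k with
      | zero => simp
      | succ k ih =>
        have h := hZrec k
        rw [Finset.sum_range_succ, mul_add]
        have hd : C2 / bet k = C2 * (bet k)⁻¹ := div_eq_mul_inv _ _
        linarith
    intro k
    have h1 := key k
    have h2 := mul_le_mul_of_nonneg_left (hgeom k) hC20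
    rw [hCZ]; linarith
  set CX : ℝ := (gam * CY + C0) / bet0 + CZ with hCX
  have hXbound : ∀ k, frob (X (k+1)) ≤ CX := by
    intro k
    have h1 := hXb k
    have h2 : (gam * CY + C0) / bet k ≤ (gam * CY + C0) / bet0 :=
      div_le_div_of_nonneg_left (by positivity) hbet0 (hbetmono k)
    have h3 := hZbound k
    rw [hCX]; linarith
  have hCX0 : 0 ≤ CX := le_trans (frob_nonneg (X 1)) (hXbound 0)
  -- Step E : X (k+1) - Z k small
  set C3 : ℝ := gam * CY + C0 + gam * (Ca * CX) with hC3
  have hXZk : ∀ k, frob (X (k+1) - Z k) ≤ C3 / bet k := by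
    intro k
    have hβ := hbetpos k
    have h := hceq k
    have h' : bet k • X (k+1) = gam • (Aᴴ * Y) + bet k • Z k - η k
        - gam • ((Aᴴ * A) * X (k+1)) := by
      rw [← h]; abel
    have e : bet k • (X (k+1) - Z k)
        = gam • (Aᴴ * Y) - η k - gam • ((Aᴴ * A) * X (k+1)) := by
      rw [smul_sub, h']; abel
    have efrob : bet k * frob (X (k+1) - Z k)
        = frob (gam • (Aᴴ * Y) - η k - gam • ((Aᴴ * A) * X (k+1))) := by
      rw [← e, frob_smul, abs_of_pos hβ]
    have hm : frob ((Aᴴ * A) * X (k+1)) ≤ Ca * CX :=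
      le_trans (frob_mul_le _ _) (mul_le_mul_of_nonneg_left (hXbound k) hCa0)
    have hb1 : frob (gam • (Aᴴ * Y) - η k - gam • ((Aᴴ * A) * X (k+1))) ≤ C3 := by
      calc frob (gam • (Aᴴ * Y) - η k - gam • ((Aᴴ * A) * X (k+1)))
          ≤ frob (gam • (Aᴴ * Y) - η k) + frob (gam • ((Aᴴ * A) * X (k+1))) :=
            frob_sub_le _ _
        _ ≤ frob (gam • (Aᴴ * Y)) + frob (η k) + frob (gam • ((Aᴴ * A) * X (k+1))) := by
            linarith [frob_sub_le (gam • (Aᴴ * Y)) (η k)]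
        _ ≤ C3 := by
            rw [frob_smul, frob_smul, abs_of_pos hgam]
            have h1 := hηall k
            have h2 := mul_le_mul_of_nonneg_left hm hgam.le
            rw [hC3, hC0def]
            linarith
    rw [le_div_iff₀ hβ]
    calc frob (X (k+1) - Z k) * bet k = bet k * frob (X (k+1) - Z k) := mul_comm _ _
      _ ≤ C3 := by rw [efrob]; exact hb1
  -- Goal 3
  have goal3 : Tendsto (fun k => frob (Z (k + 1) - Z k)) atTop (nhds 0) := by
    apply squeeze_zero (g := fun k => (C1 + C3) / bet k) (fun k => frob_nonneg _) _ (hT (C1 + C3))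
    intro k
    have e : Z (k+1) - Z k = (Z (k+1) - X (k+1)) + (X (k+1) - Z k) := by abel
    have h1 : frob (Z (k+1) - X (k+1)) = frob (X (k+1) - Z (k+1)) := by
      rw [← frob_neg (Z (k+1) - X (k+1)), neg_sub]
    calc frob (Z (k+1) - Z k)
        ≤ frob (Z (k+1) - X (k+1)) + frob (X (k+1) - Z k) := by
          rw [e]; exact frob_add_le _ _
      _ ≤ C1 / bet k + C3 / bet k := by
          rw [h1]; exact add_le_add (hXZ k) (hXZk k)
      _ = (C1 + C3) / bet k := by rw [← add_div]
  -- Goal 2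
  have goal2 : Tendsto (fun k => frob (X (k + 1) - X k)) atTop (nhds 0) := by
    rw [← tendsto_add_atTop_iff_nat 1]
    apply squeeze_zero (g := fun k => C3 / bet (k+1) + C1 / bet k) (fun k => frob_nonneg _)
    · intro k
      have e : X (k+1+1) - X (k+1) = (X (k+2) - Z (k+1)) + (Z (k+1) - X (k+1)) := by abel
      have h1 : frob (Z (k+1) - X (k+1)) = frob (X (k+1) - Z (k+1)) := by
        rw [← frob_neg (Z (k+1) - X (k+1)), neg_sub]
      calc frob (X (k+1+1) - X (k+1))
          ≤ frob (X (k+2) - Z (k+1)) + frob (Z (k+1) - X (k+1)) := by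
            rw [e]; exact frob_add_le _ _
        _ ≤ C3 / bet (k+1) + C1 / bet k := by
            rw [h1]; exact add_le_add (hXZk (k+1)) (hXZ k)
    · have h1 : Tendsto (fun k => C3 / bet (k+1)) atTop (nhds 0) :=
        (hT C3).comp (tendsto_add_atTop_nat 1)
      have h2 := h1.add (hT C1)
      rw [add_zero] at h2
      exact h2
  exact ⟨goal1, goal2, goal3⟩
end
end

section
/- Convergence of the QNMF ADMM iteration for matrix completion (Theorem 3.3): let Y be an m×n quaternion matrix, Ω a set of index pairs (i,j), λ > 0, α > 0, β⁰ > 0, μ > 1, and set β^{(k)} = μ^k·β⁰. Suppose (X^{(k)}), (Z^{(k)}), (η^{(k)}) are sequences of m×n quaternion matrices such that for every k: (i) Z^{(k+1)}_{ij} = (Y − X^{(k)} + η^{(k)}/β^{(k)})_{ij} for (i,j) ∉ Ω and Z^{(k+1)}_{ij} = 0 for (i,j) ∈ Ω; (ii) there exist unitary quaternion matrices U^{(k)}, V^{(k)} and σ^{(k)} ∈ ℝ^M (M = min(m,n)) with σ^{(k)}₁ ≥ … ≥ σ^{(k)}_M ≥ 0 such that Y − Z^{(k+1)} + η^{(k)}/β^{(k)}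 = U^{(k)} * D(σ^{(k)}) * (V^{(k)})ᴴ and X^{(k+1)} = U^{(k)} * D(S_{λ/β^{(k)},α}(σ^{(k)})) * (V^{(k)})ᴴ; (iii) η^{(k+1)} = η^{(k)} + β^{(k)}·(Y − X^{(k+1)} − Z^{(k+1)}). Then ‖X^{(k+1)} − X^{(k)}‖_F → 0 and ‖Y − X^{(k+1)} − Z^{(k+1)}‖_F → 0 as k → ∞. -/
open Matrix BigOperators Filter

noncomputable section

namespace QnmfAux

def frobSq {m n : ℕ} (A : Matrix (Fin m) (Fin n) Quat) : ℝ := ∑ i, ∑ j, ‖A i j‖ ^ 2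

lemma frob_eq_sqrt {m n : ℕ} (A : Matrix (Fin m) (Fin n) Quat) :
    frob A = Real.sqrt (frobSq A) := rfl

lemma frobSq_nonneg {m n : ℕ} (A : Matrix (Fin m) (Fin n) Quat) : 0 ≤ frobSq A := by
  unfold frobSq; positivity

lemma frob_nonneg {m n : ℕ} (A : Matrix (Fin m) (Fin n) Quat) : 0 ≤ frob A :=
  Real.sqrt_nonneg _

def reHom : Quat →+ ℝ where
  toFun := QuaternionAlgebra.re
  map_zero' := rfl
  map_add' _ _ := rfl

lemma re_sum {ι : Type*} (s : Finset ι) (f : ι → Quat) :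
    (∑ x ∈ s, f x).re = ∑ x ∈ s, (f x).re := map_sum reHom f s

lemma norm_sq_eq_re_star_mul (q : Quat) : ‖q‖ ^ 2 = (star q * q).re := by
  rw [Quaternion.star_mul_self, Quaternion.re_coe, Quaternion.normSq_eq_norm_mul_self, sq]

lemma norm_sq_eq_re_mul_star (q : Quat) : ‖q‖ ^ 2 = (q * star q).re := by
  rw [Quaternion.self_mul_star, Quaternion.re_coe, Quaternion.normSq_eq_norm_mul_self, sq]

lemma frobSq_eq_trace_left {m n : ℕ} (A : Matrix (Fin m) (Fin n) Quat) :
    frobSq A = (Matrix.trace (Aᴴ * A)).re := by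
  rw [Matrix.trace, re_sum]
  unfold frobSq
  rw [Finset.sum_comm]
  refine Finset.sum_congr rfl fun j _ => ?_
  rw [Matrix.diag_apply, Matrix.mul_apply, re_sum]
  refine Finset.sum_congr rfl fun i _ => ?_
  rw [Matrix.conjTranspose_apply, norm_sq_eq_re_star_mul]

lemma frobSq_eq_trace_right {m n : ℕ} (A : Matrix (Fin m) (Fin n) Quat) :
    frobSq A = (Matrix.trace (A * Aᴴ)).re := by
  rw [Matrix.trace, re_sum]
  unfold frobSq
  refine Finset.sum_congr rfl fun i _ => ?_
  rw [Matrix.diag_apply, Matrix.mul_apply, re_sum]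
  refine Finset.sum_congr rfl fun j _ => ?_
  rw [Matrix.conjTranspose_apply, norm_sq_eq_re_mul_star]

lemma frobSq_conj {m n : ℕ} (U : Matrix (Fin m) (Fin m) Quat)
    (V : Matrix (Fin n) (Fin n) Quat) (A : Matrix (Fin m) (Fin n) Quat)
    (hU : Uᴴ * U = 1) (hV : Vᴴ * V = 1) :
    frobSq (U * A * Vᴴ) = frobSq A := by
  have h2 : frobSq (A * Vᴴ) = frobSq A := by
    rw [frobSq_eq_trace_right, frobSq_eq_trace_right]
    congr 2
    rw [Matrix.conjTranspose_mul, Matrix.conjTranspose_conjTranspose, Matrix.mul_assoc,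
      ← Matrix.mul_assoc Vᴴ V, hV, Matrix.one_mul]
  have h1 : frobSq (U * (A * Vᴴ)) = frobSq (A * Vᴴ) := by
    rw [frobSq_eq_trace_left, frobSq_eq_trace_left]
    congr 2
    rw [Matrix.conjTranspose_mul, Matrix.mul_assoc, ← Matrix.mul_assoc Uᴴ U, hU,
      Matrix.one_mul]
  rw [Matrix.mul_assoc, h1, h2]

def toL2 {m n : ℕ} (A : Matrix (Fin m) (Fin n) Quat) :
    PiLp 2 (fun _ : Fin m × Fin n => Quat) := WithLp.toLp 2 (fun p : Fin m × Fin n => A p.1 p.2)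

lemma frob_eq_norm {m n : ℕ} (A : Matrix (Fin m) (Fin n) Quat) : frob A = ‖toL2 A‖ := by
  rw [PiLp.norm_eq_sum (p := 2) (by norm_num)]
  rw [frob, Real.sqrt_eq_rpow]
  norm_num
  rw [Fintype.sum_prod_type]
  norm_num [toL2]

lemma frob_add_le {m n : ℕ} (A B : Matrix (Fin m) (Fin n) Quat) :
    frob (A + B) ≤ frob A + frob B := by
  rw [frob_eq_norm, frob_eq_norm, frob_eq_norm]
  exact norm_add_le (toL2 A) (toL2 B)

lemma frob_neg {m n : ℕ} (A : Matrix (Fin m) (Fin n) Quat) : frob (-A) = frob A := by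
  rw [frob_eq_norm, frob_eq_norm]
  exact norm_neg (toL2 A)

lemma frob_sub_le {m n : ℕ} (A B : Matrix (Fin m) (Fin n) Quat) :
    frob (A - B) ≤ frob A + frob B := by
  rw [sub_eq_add_neg]
  calc frob (A + -B) ≤ frob A + frob (-B) := frob_add_le _ _
    _ = frob A + frob B := by rw [frob_neg]

lemma frob_smul {m n : ℕ} (c : ℝ) (A : Matrix (Fin m) (Fin n) Quat) :
    frob (c • A) = |c| * frob A := by
  rw [frob_eq_norm, frob_eq_norm]
  have h : toL2 (c • A) = c • toL2 A := rfl
  rw [h, norm_smul, Real.norm_eq_abs]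

lemma sqrt_add_le (a b : ℝ) (ha : 0 ≤ a) (hb : 0 ≤ b) :
    Real.sqrt (a + b) ≤ Real.sqrt a + Real.sqrt b := by
  have h : a + b ≤ (Real.sqrt a + Real.sqrt b) ^ 2 := by
    nlinarith [Real.sq_sqrt ha, Real.sq_sqrt hb, Real.sqrt_nonneg a, Real.sqrt_nonneg b,
      mul_nonneg (Real.sqrt_nonneg a) (Real.sqrt_nonneg b)]
  calc Real.sqrt (a + b) ≤ Real.sqrt ((Real.sqrt a + Real.sqrt b) ^ 2) := Real.sqrt_le_sqrt h
    _ = Real.sqrt a + Real.sqrt b := Real.sqrt_sq (by positivity)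



lemma Dmat_sub {m n : ℕ} (s t : Fin (min m n) → ℝ) :
    Dmat (m := m) (n := n) s - Dmat t = Dmat (s - t) := by
  funext i j
  simp only [Matrix.sub_apply, Dmat]
  split
  · simp [Pi.sub_apply, Quaternion.coe_sub]
  · simp

lemma frobSq_Dmat_le {m n : ℕ} (t : Fin (min m n) → ℝ) (c : ℝ) (hc : 0 ≤ c)
    (ht : ∀ i, |t i| ≤ c) : (∑ i, ∑ j, ‖Dmat (m := m) (n := n) t i j‖ ^ 2) ≤ m * c ^ 2 := by
  have hinner : ∀ i : Fin m, ∑ j : Fin n, ‖Dmat (m := m) (n := n) t i j‖ ^ 2 ≤ c ^ 2 := by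
    intro i
    by_cases him : (i : ℕ) < n
    · rw [Finset.sum_eq_single (⟨(i : ℕ), him⟩ : Fin n)]
      · show ‖Dmat t i ⟨(i : ℕ), him⟩‖ ^ 2 ≤ c ^ 2
        rw [Dmat, dif_pos rfl, Quaternion.norm_coe, Real.norm_eq_abs]
        exact pow_le_pow_left₀ (abs_nonneg _) (ht _) 2
      · intro j _ hj
        have : (i : ℕ) ≠ (j : ℕ) := fun h => hj (by ext; exact h.symm)
        rw [Dmat, dif_neg this, norm_zero]
        norm_num
      · intro h; exact absurd (Finset.mem_univ _) h
    · have hz : ∀ j : Fin n, Dmat (m := m) (n := n) t i j = 0 := by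
        intro j
        rw [Dmat, dif_neg]
        intro h; exact him (h ▸ j.isLt)
      simp only [hz, norm_zero]
      simp
      positivity
  calc (∑ i, ∑ j, ‖Dmat (m := m) (n := n) t i j‖ ^ 2) ≤ ∑ _i : Fin m, c ^ 2 :=
        Finset.sum_le_sum fun i _ => hinner i
    _ = m * c ^ 2 := by simp [Finset.sum_const, Finset.card_univ, nsmul_eq_mul]

lemma abs_sub_shrink {M : ℕ} (lam alph : ℝ) (hl : 0 < lam) (ha : 0 < alph)
    (σ : Fin M → ℝ) (hσ : ∀ i, 0 ≤ σ i) (i : Fin M) :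
    |σ i - Sshrink lam alph σ i| ≤ lam := by
  simp only [Sshrink]
  set z : Fin M → ℝ := fun i => if lam < σ i then σ i - lam / 2 else 0 with hz
  set nz : ℝ := Real.sqrt (∑ i, z i ^ 2) with hnz
  by_cases h0 : nz = 0
  · rw [if_pos h0]
    have hle : σ i ≤ lam := by
      by_contra hlt
      push_neg at hlt
      have hzi : z i = σ i - lam / 2 := by simp only [hz, if_pos hlt]
      have h1 : 0 < z i := by rw [hzi]; linarith
      have h2 : z i ^ 2 ≤ ∑ j, z j ^ 2 := by
        apply Finset.single_le_sum (f := fun j => z j ^ 2) (fun j _ => sq_nonneg _)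
          (Finset.mem_univ i)
      have h3 : 0 < nz := by
        rw [hnz]
        apply Real.sqrt_pos.mpr
        nlinarith
      exact h3.ne' h0
    rw [sub_zero, abs_of_nonneg (hσ i)]
    exact hle
  · rw [if_neg h0]
    have hnz0 : 0 < nz := lt_of_le_of_ne (Real.sqrt_nonneg _) (Ne.symm h0)
    set K : ℝ := 1 + alph * lam / (2 * nz) with hK
    have hK1 : 1 < K := by
      rw [hK]
      have : 0 < alph * lam / (2 * nz) := by positivity
      linarith
    by_cases hb1 : K * lam / (2 * (K - 1)) < σ i
    · rw [if_pos hb1]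
      simp [abs_of_nonneg, hl.le]
    · rw [if_neg hb1]
      push_neg at hb1
      by_cases hb2 : lam < σ i
      · rw [if_pos hb2]
        have hKs : (K - 1) * σ i ≤ K * lam / 2 := by
          have h2K : 0 < 2 * (K - 1) := by linarith
          have := (le_div_iff₀ h2K).mp hb1
          clear_value K
          nlinarith
        clear_value K
        rw [abs_le]
        constructor
        · nlinarith
        · nlinarith [mul_nonneg (sub_nonneg.mpr hK1.le) (sub_nonneg.mpr hb2.le),
            mul_pos (show (0:ℝ) < K by linarith) hl]
      · rw [if_neg hb2]
        push_neg at hb2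
        rw [sub_zero, abs_of_nonneg (hσ i)]
        exact hb2

end QnmfAux

theorem qnmf_admm_matrix_completion_convergence (m n : ℕ)
    (Y : Matrix (Fin m) (Fin n) Quat) (Ω : Set (Fin m × Fin n))
    (lam alph bet0 mu : ℝ)
    (hlam : 0 < lam) (halph : 0 < alph) (hbet0 : 0 < bet0) (hmu : 1 < mu)
    (bet : ℕ → ℝ) (hbet : ∀ k, bet k = mu ^ k * bet0)
    (X Z η : ℕ → Matrix (Fin m) (Fin n) Quat)
    (hZ : ∀ k, ∀ i j,
        ((i, j) ∉ Ω → Z (k + 1) i j = (Y - X k + (bet k)⁻¹ • η k) i j) ∧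
        ((i, j) ∈ Ω → Z (k + 1) i j = 0))
    (hX : ∀ k, ∃ (U : Matrix (Fin m) (Fin m) Quat) (V : Matrix (Fin n) (Fin n) Quat)
        (σ : Fin (min m n) → ℝ),
        IsQUnitary U ∧ IsQUnitary V ∧ Antitone σ ∧ (∀ i, 0 ≤ σ i) ∧
        Y - Z (k + 1) + (bet k)⁻¹ • η k = U * Dmat σ * Vᴴ ∧
        X (k + 1) = U * Dmat (Sshrink (lam / bet k) alph σ) * Vᴴ)
    (hη : ∀ k, η (k + 1) = η k + bet k • (Y - X (k + 1) - Z (k + 1))) :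
    Tendsto (fun k => frob (X (k + 1) - X k)) atTop (nhds 0) ∧
    Tendsto (fun k => frob (Y - X (k + 1) - Z (k + 1))) atTop (nhds 0) := by
  classical
  have hmu0 : 0 < mu := lt_trans one_pos hmu
  have hbetpos : ∀ k, 0 < bet k := fun k => by
    rw [hbet]; exact mul_pos (pow_pos hmu0 k) hbet0
  set C : ℝ := Real.sqrt m * lam with hC
  have hC0 : 0 ≤ C := mul_nonneg (Real.sqrt_nonneg _) hlam.le
  -- Step 1 : boundedness of the multiplier
  have hηb : ∀ k, frob (η (k + 1)) ≤ C := by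
    intro k
    obtain ⟨U, V, σ, hU, hV, _hmono, hσ0, hA, hXk⟩ := hX k
    have hβ := hbetpos k
    have hlam' : 0 < lam / bet k := div_pos hlam hβ
    have key : η (k + 1) =
        bet k • (U * Dmat (σ - Sshrink (lam / bet k) alph σ) * Vᴴ) := by
      rw [← QnmfAux.Dmat_sub, Matrix.mul_sub, Matrix.sub_mul, ← hA, ← hXk, hη k]
      have h1 : bet k • ((bet k)⁻¹ • η k) = η k := by
        rw [smul_smul, mul_inv_cancel₀ hβ.ne', one_smul]
      have h2 : Y - Z (k + 1) + (bet k)⁻¹ • η k - X (k + 1) =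
          (Y - X (k + 1) - Z (k + 1)) + (bet k)⁻¹ • η k := by abel
      rw [h2, smul_add, h1]
      abel
    have hdb : QnmfAux.frobSq (Dmat (σ - Sshrink (lam / bet k) alph σ)) ≤
        m * (lam / bet k) ^ 2 := by
      apply QnmfAux.frobSq_Dmat_le _ _ hlam'.le
      intro i
      have := QnmfAux.abs_sub_shrink (lam / bet k) alph hlam' halph σ hσ0 i
      simpa [abs_sub_comm] using this
    have hfd : frob (U * Dmat (σ - Sshrink (lam / bet k) alph σ) * Vᴴ) ≤
        Real.sqrt m * (lam / bet k) := by
      rw [QnmfAux.frob_eq_sqrt, QnmfAux.frobSq_conj U V _ hU.1 hV.1]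
      calc Real.sqrt (QnmfAux.frobSq (Dmat (σ - Sshrink (lam / bet k) alph σ)))
          ≤ Real.sqrt (m * (lam / bet k) ^ 2) := Real.sqrt_le_sqrt hdb
        _ = Real.sqrt m * (lam / bet k) := by
            rw [Real.sqrt_mul (by positivity), Real.sqrt_sq hlam'.le]
    rw [key, QnmfAux.frob_smul, abs_of_pos hβ]
    calc bet k * frob (U * Dmat (σ - Sshrink (lam / bet k) alph σ) * Vᴴ)
        ≤ bet k * (Real.sqrt m * (lam / bet k)) := by
          exact mul_le_mul_of_nonneg_left hfd hβ.le
      _ = C := by rw [hC]; field_simp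
  set C0 : ℝ := max C (frob (η 0)) with hC0def
  have hηall : ∀ k, frob (η k) ≤ C0 := by
    intro k
    cases k with
    | zero => exact le_max_right _ _
    | succ k => exact le_trans (hηb k) (le_max_left _ _)
  have hC00 : 0 ≤ C0 := le_trans hC0 (le_max_left _ _)
  -- Step 2 : feasibility residual
  have hFeq : ∀ k, Y - X (k + 1) - Z (k + 1) = (bet k)⁻¹ • (η (k + 1) - η k) := by
    intro k
    have hβ := hbetpos k
    rw [hη k, add_sub_cancel_left, smul_smul, inv_mul_cancel₀ hβ.ne', one_smul]
  have hF : ∀ k, frob (Y - X (k + 1) - Z (k + 1)) ≤ 2 * C0 / bet k := by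
    intro k
    have hβ := hbetpos k
    rw [hFeq k, QnmfAux.frob_smul, abs_of_pos (inv_pos.mpr hβ)]
    have h1 : frob (η (k + 1) - η k) ≤ 2 * C0 := by
      calc frob (η (k + 1) - η k) ≤ frob (η (k + 1)) + frob (η k) :=
            QnmfAux.frob_sub_le _ _
        _ ≤ C0 + C0 := add_le_add (hηall _) (hηall _)
        _ = 2 * C0 := by ring
    calc (bet k)⁻¹ * frob (η (k + 1) - η k) ≤ (bet k)⁻¹ * (2 * C0) :=
          mul_le_mul_of_nonneg_left h1 (inv_pos.mpr hβ).le
      _ = 2 * C0 / bet k := by rw [div_eq_inv_mul]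
  -- auxiliary tendsto
  have htend : ∀ c : ℝ, Tendsto (fun k => c / bet k) atTop (nhds 0) := by
    intro c
    have h1 : Tendsto (fun k : ℕ => mu ^ k) atTop atTop :=
      tendsto_pow_atTop_atTop_of_one_lt hmu
    have h2 : Tendsto (fun k : ℕ => (mu ^ k)⁻¹) atTop (nhds 0) := h1.inv_tendsto_atTop
    have h3 := h2.const_mul (c / bet0)
    rw [mul_zero] at h3
    refine h3.congr fun k => ?_
    rw [hbet, mul_comm ((mu : ℝ) ^ k) bet0, ← div_div]
    ring
  have conc2 : Tendsto (fun k => frob (Y - X (k + 1) - Z (k + 1))) atTop (nhds 0) :=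
    squeeze_zero (fun k => QnmfAux.frob_nonneg _) hF (htend (2 * C0))
  -- Step 3
  have hE : ∀ k, frob (Y - X (k + 1) - Z (k + 2)) ≤ 2 * C0 / bet k + C0 / bet (k + 1) := by
    intro k
    have hβ1 := hbetpos (k + 1)
    have hptw : ∀ i j, ‖(Y - X (k + 1) - Z (k + 2)) i j‖ ^ 2 ≤
        ‖(Y - X (k + 1) - Z (k + 1)) i j‖ ^ 2 +
          ‖((bet (k + 1))⁻¹ • η (k + 1)) i j‖ ^ 2 := by
      intro i j
      by_cases hmem : (i, j) ∈ Ω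
      · have h1 := (hZ (k + 1) i j).2 hmem
        have h2 := (hZ k i j).2 hmem
        have heq : (Y - X (k + 1) - Z (k + 2)) i j = (Y - X (k + 1) - Z (k + 1)) i j := by
          simp only [Matrix.sub_apply, h1, h2]
        rw [heq]
        have := sq_nonneg ‖((bet (k + 1))⁻¹ • η (k + 1)) i j‖
        linarith
      · have h1 := (hZ (k + 1) i j).1 hmem
        have heq : (Y - X (k + 1) - Z (k + 2)) i j =
            -(((bet (k + 1))⁻¹ • η (k + 1)) i j) := by
          simp only [Matrix.sub_apply, Matrix.add_apply] at h1 ⊢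
          rw [h1]
          abel
        rw [heq, norm_neg]
        have := sq_nonneg ‖(Y - X (k + 1) - Z (k + 1)) i j‖
        linarith
    have hsum : QnmfAux.frobSq (Y - X (k + 1) - Z (k + 2)) ≤
        QnmfAux.frobSq (Y - X (k + 1) - Z (k + 1)) +
          QnmfAux.frobSq ((bet (k + 1))⁻¹ • η (k + 1)) := by
      unfold QnmfAux.frobSq
      rw [← Finset.sum_add_distrib]
      refine Finset.sum_le_sum fun i _ => ?_
      rw [← Finset.sum_add_distrib]
      exact Finset.sum_le_sum fun j _ => hptw i j
    have hb2 : frob ((bet (k + 1))⁻¹ • η (k + 1)) ≤ C0 / bet (k + 1) := by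
      rw [QnmfAux.frob_smul, abs_of_pos (inv_pos.mpr hβ1)]
      calc (bet (k + 1))⁻¹ * frob (η (k + 1)) ≤ (bet (k + 1))⁻¹ * C0 :=
            mul_le_mul_of_nonneg_left (hηall _) (inv_pos.mpr hβ1).le
        _ = C0 / bet (k + 1) := by rw [div_eq_inv_mul]
    calc frob (Y - X (k + 1) - Z (k + 2))
        = Real.sqrt (QnmfAux.frobSq (Y - X (k + 1) - Z (k + 2))) := rfl
      _ ≤ Real.sqrt (QnmfAux.frobSq (Y - X (k + 1) - Z (k + 1)) +
            QnmfAux.frobSq ((bet (k + 1))⁻¹ • η (k + 1))) := Real.sqrt_le_sqrt hsum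
      _ ≤ Real.sqrt (QnmfAux.frobSq (Y - X (k + 1) - Z (k + 1))) +
            Real.sqrt (QnmfAux.frobSq ((bet (k + 1))⁻¹ • η (k + 1))) :=
          QnmfAux.sqrt_add_le _ _ (QnmfAux.frobSq_nonneg _) (QnmfAux.frobSq_nonneg _)
      _ = frob (Y - X (k + 1) - Z (k + 1)) + frob ((bet (k + 1))⁻¹ • η (k + 1)) := rfl
      _ ≤ 2 * C0 / bet k + C0 / bet (k + 1) := add_le_add (hF k) hb2
  have hXdiff : ∀ k, frob (X (k + 2) - X (k + 1)) ≤ 5 * C0 / bet k := by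
    intro k
    have hβ := hbetpos k
    have hβ1 := hbetpos (k + 1)
    have hsplit : X (k + 2) - X (k + 1) =
        (Y - X (k + 1) - Z (k + 2)) - (Y - X (k + 2) - Z (k + 2)) := by abel
    rw [hsplit]
    have hbk : bet k ≤ bet (k + 1) := by
      rw [hbet, hbet, pow_succ]
      nlinarith [mul_le_mul_of_nonneg_left hmu.le (mul_pos (pow_pos hmu0 k) hbet0).le]
    have hmono : ∀ c : ℝ, 0 ≤ c → c / bet (k + 1) ≤ c / bet k := by
      intro c hc
      gcongr
    calc frob ((Y - X (k + 1) - Z (k + 2)) - (Y - X (k + 2) - Z (k + 2)))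
        ≤ frob (Y - X (k + 1) - Z (k + 2)) + frob (Y - X (k + 2) - Z (k + 2)) :=
          QnmfAux.frob_sub_le _ _
      _ ≤ (2 * C0 / bet k + C0 / bet (k + 1)) + 2 * C0 / bet (k + 1) :=
          add_le_add (hE k) (hF (k + 1))
      _ ≤ (2 * C0 / bet k + C0 / bet k) + 2 * C0 / bet k := by
          have := hmono C0 hC00
          have := hmono (2 * C0) (by linarith)
          linarith
      _ = 5 * C0 / bet k := by ring
  have conc1' : Tendsto (fun k => frob (X (k + 1 + 1) - X (k + 1))) atTop (nhds 0) :=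
    squeeze_zero (fun k => QnmfAux.frob_nonneg _) hXdiff (htend (5 * C0))
  have conc1 : Tendsto (fun k => frob (X (k + 1) - X k)) atTop (nhds 0) :=
    (tendsto_add_atTop_iff_nat 1).mp conc1'
  exact ⟨conc1, conc2⟩
end
end

section
/- Quaternion soft-thresholding solves the modulus-regularized proximal problem: let y ∈ ℍ, ρ > 0 and β > 0. Define q* = (y/|y|)·max(|y| − ρ/β, 0) if y ≠ 0 and q* = 0 if y = 0. Then for every quaternion q ∈ ℍ, ρ·|q| + (β/2)·|q − y|² ≥ ρ·|q*| + (β/2)·|q* − y|². -/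
open Matrix BigOperators Filter

noncomputable section

lemma scalar_prox (a t rho bet : ℝ) (hrho : 0 < rho) (hbet : 0 < bet)
    (ha : 0 ≤ a) (ht : 0 ≤ t) :
    rho * max (a - rho / bet) 0 + (bet / 2) * (max (a - rho / bet) 0 - a) ^ 2 ≤
    rho * t + (bet / 2) * (t - a) ^ 2 := by
  rcases le_or_gt a (rho / bet) with h | h
  · rw [max_eq_right (by linarith)]
    have : bet * a ≤ rho := by
      rw [le_div_iff₀ hbet] at h; linarith
    nlinarith [sq_nonneg t, mul_nonneg ht (sub_nonneg.2 this)]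
  · rw [max_eq_left (by linarith)]
    have hb : bet * (rho / bet) = rho := by field_simp
    nlinarith [sq_nonneg (t - a + rho / bet)]

open Classical in
theorem quaternion_soft_threshold_prox (y : Quat) (rho bet : ℝ)
    (hrho : 0 < rho) (hbet : 0 < bet) :
    let qstar : Quat := if y = 0 then 0 else (max (‖y‖ - rho / bet) 0 / ‖y‖) • y
    ∀ q : Quat,
      rho * ‖qstar‖ + (bet / 2) * ‖qstar - y‖ ^ 2 ≤
      rho * ‖q‖ + (bet / 2) * ‖q - y‖ ^ 2 := by
  intro qstar q
  by_cases hy : y = 0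
  · simp only [qstar, hy, if_pos rfl]
    simp [hy]
    positivity
  · simp only [qstar, if_neg hy]
    have ha : 0 < ‖y‖ := norm_pos_iff.2 hy
    set c : ℝ := max (‖y‖ - rho / bet) 0 with hc
    have hc0 : 0 ≤ c := le_max_right _ _
    have hns : ‖(c / ‖y‖) • y‖ = c := by
      rw [norm_smul, Real.norm_eq_abs, abs_of_nonneg (by positivity)]
      field_simp
    have hsub : ‖(c / ‖y‖) • y - y‖ = |c - ‖y‖| := by
      have : (c / ‖y‖) • y - y = (c / ‖y‖ - 1) • y := by
        rw [sub_smul, one_smul]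
      rw [this, norm_smul, Real.norm_eq_abs]
      rw [show c / ‖y‖ - 1 = (c - ‖y‖) / ‖y‖ by field_simp]
      rw [abs_div, abs_of_pos ha, div_mul_cancel₀ _ ha.ne']
    rw [hns, hsub]
    have key := scalar_prox ‖y‖ ‖q‖ rho bet hrho hbet (norm_nonneg y) (norm_nonneg q)
    rw [← hc] at key
    have h2 : (‖q‖ - ‖y‖) ^ 2 ≤ ‖q - y‖ ^ 2 := by
      have h1 := abs_norm_sub_norm_le q y
      have h2 := sq_abs (‖q‖ - ‖y‖)
      nlinarith [abs_nonneg (‖q‖ - ‖y‖), norm_nonneg (q - y)]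
    have : (bet / 2) * (‖q‖ - ‖y‖) ^ 2 ≤ (bet / 2) * ‖q - y‖ ^ 2 := by
      apply mul_le_mul_of_nonneg_left h2 (by positivity)
    calc rho * c + (bet / 2) * |c - ‖y‖| ^ 2
        = rho * c + (bet / 2) * (c - ‖y‖) ^ 2 := by rw [sq_abs]
      _ ≤ rho * ‖q‖ + (bet / 2) * (‖q‖ - ‖y‖) ^ 2 := key
      _ ≤ rho * ‖q‖ + (bet / 2) * ‖q - y‖ ^ 2 := by linarith
end
end

section
/- Invertibility of the regularized quaternion normal matrix: for every m×m quaternion matrix A and real numbers γ ≥ 0 and β > 0, the m×m quaternion matrix γ·Aᴴ*A + β·I is invertible (is a unit in the ring of m×m quaternion matrices). -/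
set_option maxHeartbeats 1000000


open Matrix BigOperators Filter

noncomputable section

instance : StarModule ℝ Quat :=
  ⟨fun r q => by ext <;> simp [Quaternion.re_smul, Quaternion.re_star, Quaternion.imI_star,
    Quaternion.imJ_star, Quaternion.imK_star]⟩

private lemma key_sum (m : ℕ) (A : Matrix (Fin m) (Fin m) Quat) (v : Fin m → Quat) :
    ∑ i, star (v i) * ((Aᴴ * A) *ᵥ v) i = ∑ k, star ((A *ᵥ v) k) * ((A *ᵥ v) k) := by
  simp only [mulVec, dotProduct, Matrix.mul_apply, conjTranspose_apply, star_sum,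
    StarMul.star_mul, star_star, Finset.mul_sum, Finset.sum_mul]
  conv_lhs => enter [2]; ext i; rw [Finset.sum_comm]
  rw [Finset.sum_comm]
  apply Finset.sum_congr rfl; intro k _
  rw [Finset.sum_comm]
  apply Finset.sum_congr rfl; intro i _
  apply Finset.sum_congr rfl; intro j _
  simp [mul_assoc]

private lemma mulVec_zero_imp (m : ℕ) (A : Matrix (Fin m) (Fin m) Quat) (gam bet : ℝ)
    (hgam : 0 ≤ gam) (hbet : 0 < bet) (v : Fin m → Quat)
    (hv : (gam • (Aᴴ * A) + bet • (1 : Matrix (Fin m) (Fin m) Quat)) *ᵥ v = 0) :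
    v = 0 := by
  have h0 : ∑ i, star (v i) * (((gam • (Aᴴ * A) + bet • (1 : Matrix (Fin m) (Fin m) Quat)) *ᵥ v) i) = 0 := by
    rw [hv]; simp
  rw [Matrix.add_mulVec, Matrix.smul_mulVec, Matrix.smul_mulVec,
    Matrix.one_mulVec] at h0
  simp only [Pi.add_apply, Pi.smul_apply, mul_add, Finset.sum_add_distrib,
    mul_smul_comm] at h0
  rw [← Finset.smul_sum, ← Finset.smul_sum, key_sum] at h0
  simp only [Quaternion.star_mul_self] at h0
  have hre : gam * (∑ k, Quaternion.normSq ((A *ᵥ v) k)) +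
      bet * (∑ i, Quaternion.normSq (v i)) = 0 := by
    have hsum : ∀ (f : Fin m → Quat), (∑ x, f x).re = ∑ x, (f x).re :=
      fun f => map_sum (QuaternionAlgebra.reₗ (R := ℝ) (-1) 0 (-1)) f Finset.univ
    have := congrArg QuaternionAlgebra.re h0
    simpa [Quaternion.re_smul, hsum, Quaternion.re_coe, Quaternion.re_zero] using this
  have h1 : 0 ≤ gam * (∑ k, Quaternion.normSq ((A *ᵥ v) k)) :=
    mul_nonneg hgam (Finset.sum_nonneg fun k _ => Quaternion.normSq_nonneg)
  have h2 : 0 ≤ ∑ i, Quaternion.normSq (v i) :=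
    Finset.sum_nonneg fun i _ => Quaternion.normSq_nonneg
  have h3 : ∑ i, Quaternion.normSq (v i) = 0 := by nlinarith
  funext i
  have := (Finset.sum_eq_zero_iff_of_nonneg
    (fun i _ => Quaternion.normSq_nonneg)).mp h3 i (Finset.mem_univ i)
  simpa [Quaternion.normSq_eq_zero] using this

theorem regularized_normal_matrix_invertible (m : ℕ)
    (A : Matrix (Fin m) (Fin m) Quat) (gam bet : ℝ)
    (hgam : 0 ≤ gam) (hbet : 0 < bet) :
    IsUnit (gam • (Aᴴ * A) + bet • (1 : Matrix (Fin m) (Fin m) Quat)) := by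
  set M : Matrix (Fin m) (Fin m) Quat := gam • (Aᴴ * A) + bet • 1 with hM
  have hself : Mᴴ = M := by
    rw [hM]
    rw [conjTranspose_add, conjTranspose_smul, conjTranspose_smul, conjTranspose_mul,
      conjTranspose_conjTranspose, conjTranspose_one]
    norm_num
  have hker : ∀ v : Fin m → Quat, M.vecMulLinear v = 0 → v = 0 := by
    intro v hv
    have h1 : M *ᵥ star v = 0 := by
      have := congrArg star hv
      rw [Matrix.vecMulLinear_apply, Matrix.star_vecMul, hself] at this
      simpa using this
    have h2 := mulVec_zero_imp m A gam bet hgam hbet (star v) h1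
    have := congrArg star h2
    simpa using this
  have hinj : Function.Injective M.vecMulLinear := by
    rw [← LinearMap.ker_eq_bot, LinearMap.ker_eq_bot']
    exact hker
  have hsurj : Function.Surjective M.vecMul :=
    LinearMap.injective_iff_surjective.mp hinj
  obtain ⟨B, hB⟩ := Matrix.vecMul_surjective_iff_exists_left_inverse.mp hsurj
  have hB2 : M * Bᴴ = 1 := by
    have := congrArg conjTranspose hB
    rwa [conjTranspose_mul, hself, conjTranspose_one] at this
  have hBB : B = Bᴴ := by
    calc B = B * (M * Bᴴ) := by rw [hB2, mul_one]
    _ = (B * M) * Bᴴ := by rw [Matrix.mul_assoc]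
    _ = Bᴴ := by rw [hB, Matrix.one_mul]
  exact ⟨⟨M, Bᴴ, hB2, hBB ▸ hB⟩, rfl⟩
end
end
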